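/- arXiv:1011.5079 — 3 statements merged into one kernel-verified Lean document; each statement's English description precedes it below -/
import Mathlib

section
/- Let A be a commutative ring and let P be a finitely generated projective A-module of constant rank ≥ 2. Then EL(A ⊕ P) = E(A ⊕ P), where EL(A ⊕ P) is the subgroup of Aut_A(A ⊕ P) generated by the automorphisms Δ_{aφ}: (x,q) ↦ (x + aφ(q), q) for a ∈ A, φ ∈ Hom_A(P,A), and Γ_m: (x,q) ↦ (x, q + x·m) for m ∈ P. -/
/-! Common definitions: unimodular elements, transvections, the groups `E(M)`,
elementary matrices, `E_n(R)` and relatives, unimodular rows, constant rank. -/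

/-- An element `m` of an `A`-module `M` is unimodular if some linear functional maps it to `1`. -/
def IsUnimodular (A : Type*) [CommRing A] {M : Type*} [AddCommGroup M] [Module A M]
    (m : M) : Prop := ∃ φ : M →ₗ[A] A, φ m = 1

/-- A transvection of an `A`-module `M`: an automorphism `q ↦ q + φ(q) • p` with `φ(p) = 0`
and `p` unimodular or `φ` unimodular in the dual module. -/
def IsTransvection (A : Type*) [CommRing A] {M : Type*} [AddCommGroup M] [Module A M]
    (τ : M ≃ₗ[A] M) : Prop :=
  ∃ (p : M) (φ : M →ₗ[A] A), φ p = 0 ∧ (IsUnimodular A p ∨ IsUnimodular A φ) ∧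
    ∀ q : M, τ q = q + φ q • p

/-- `E(M)`: the subgroup of `Aut_A(M)` generated by all transvections. -/
def Egroup (A : Type*) [CommRing A] (M : Type*) [AddCommGroup M] [Module A M] :
    Subgroup (M ≃ₗ[A] M) := Subgroup.closure {τ | IsTransvection A τ}

/-- `E(M)` acts transitively on `Um(M)`. -/
def ETransitive (A : Type*) [CommRing A] (M : Type*) [AddCommGroup M] [Module A M] : Prop :=
  ∀ u v : M, IsUnimodular A u → IsUnimodular A v → ∃ σ ∈ Egroup A M, σ u = v

/-- The elementary matrix `Id + a • e_{i j}`. -/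
def elemMatrix {R : Type*} [CommRing R] {n : ℕ} (i j : Fin n) (a : R) :
    Matrix (Fin n) (Fin n) R := 1 + Matrix.single i j a

/-- `E_n(R)`: the subgroup of `GL_n(R)` generated by the elementary matrices `E_{ij}(a)`, `i ≠ j`. -/
def En (R : Type*) [CommRing R] (n : ℕ) : Subgroup (GL (Fin n) R) :=
  Subgroup.closure {g | ∃ i j a, i ≠ j ∧ (g : Matrix (Fin n) (Fin n) R) = elemMatrix i j a}

/-- `E_n(I)`: the subgroup of `E_n(R)` generated by the `E_{ij}(a)` with `a ∈ I`. -/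
def EnIdeal (R : Type*) [CommRing R] (n : ℕ) (I : Ideal R) : Subgroup (GL (Fin n) R) :=
  Subgroup.closure
    {g | ∃ i j a, i ≠ j ∧ a ∈ I ∧ (g : Matrix (Fin n) (Fin n) R) = elemMatrix i j a}

/-- `E_n(R, I)`: the normal closure of `E_n(I)` in `E_n(R)`. -/
def EnRel (R : Type*) [CommRing R] (n : ℕ) (I : Ideal R) : Subgroup (GL (Fin n) R) :=
  Subgroup.closure {x | ∃ e ∈ En R n, ∃ g ∈ EnIdeal R n I, x = e * g * e⁻¹}

/-- `E_n^1(R, I)`: the subgroup generated by `E_{i1}(a)`, `a ∈ R`, `i ≠ 1`, together with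
`E_{1j}(x)`, `x ∈ I`, `j ≠ 1` (indices `1,…,n` are `Fin n`, the first index being `⟨0, _⟩`). -/
def En1 (R : Type*) [CommRing R] (n : ℕ) (hn : 0 < n) (I : Ideal R) : Subgroup (GL (Fin n) R) :=
  Subgroup.closure
    {g | (∃ (i : Fin n) (a : R), i ≠ ⟨0, hn⟩ ∧
            (g : Matrix (Fin n) (Fin n) R) = elemMatrix i ⟨0, hn⟩ a) ∨
         (∃ (j : Fin n) (x : R), x ∈ I ∧ j ≠ ⟨0, hn⟩ ∧
            (g : Matrix (Fin n) (Fin n) R) = elemMatrix ⟨0, hn⟩ j x)}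

/-- A row is unimodular if its entries generate the unit ideal. -/
def IsUnimodularRow {R : Type*} [CommRing R] {n : ℕ} (v : Fin n → R) : Prop :=
  Ideal.span (Set.range v) = ⊤

/-- `E_n(R)` acts transitively on `Um_n(R)` (by right multiplication on rows). -/
def EnTransitive (R : Type*) [CommRing R] (n : ℕ) : Prop :=
  ∀ u v : Fin n → R, IsUnimodularRow u → IsUnimodularRow v →
    ∃ g ∈ En R n, Matrix.vecMul u (g : Matrix (Fin n) (Fin n) R) = v

/-- A module `P` has constant rank `r`: the localization at every prime is free of rank `r`. -/
def HasConstantRank (A : Type*) [CommRing A] (P : Type*) [AddCommGroup P] [Module A P]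
    (r : ℕ) : Prop :=
  ∀ (𝔭 : Ideal A) (_ : 𝔭.IsPrime),
    Nonempty ((LocalizedModule 𝔭.primeCompl P) ≃ₗ[Localization.AtPrime 𝔭]
      (Fin r → Localization.AtPrime 𝔭))
/-- `EL(A ⊕ P)`: the subgroup of `Aut_A(A ⊕ P)` generated by the automorphisms
`Δ_{aφ} : (x, q) ↦ (x + a φ(q), q)` and `Γ_m : (x, q) ↦ (x, q + x • m)`. -/
def ELgroup (A : Type*) [CommRing A] (P : Type*) [AddCommGroup P] [Module A P] :
    Subgroup ((A × P) ≃ₗ[A] (A × P)) :=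
  Subgroup.closure
    ({σ | ∃ (a : A) (φ : P →ₗ[A] A), ∀ (x : A) (q : P), σ (x, q) = (x + a * φ q, q)} ∪
     {σ | ∃ m : P, ∀ (x : A) (q : P), σ (x, q) = (x, q + x • m)})


variable {A : Type*} [CommRing A] {P : Type*} [AddCommGroup P] [Module A P]

namespace ELtool

/-- The transvection-like automorphism `v ↦ v + F v • p`, for `F p = 0`. -/
def trv (p : A × P) (F : (A × P) →ₗ[A] A) (h : F p = 0) : (A × P) ≃ₗ[A] (A × P) where
  toFun v := v + F v • p
  invFun v := v - F v • p
  map_add' v w := by simp [add_smul]; abel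
  map_smul' c v := by simp [smul_smul, smul_add]
  left_inv v := by simp [h, add_smul]
  right_inv v := by simp [h, sub_smul, map_sub]

@[simp] lemma trv_apply (p : A × P) (F : (A × P) →ₗ[A] A) (h : F p = 0) (v : A × P) :
    trv p F h v = v + F v • p := rfl

lemma trv_ext {p p' : A × P} {F F' : (A × P) →ₗ[A] A} {h h'}
    (hp : ∀ v : A × P, F v • p = F' v • p') : trv p F h = trv p' F' h' := by
  apply LinearEquiv.ext; intro v; simp [hp v]

lemma mul_apply (e₁ e₂ : (A × P) ≃ₗ[A] (A × P)) (v : A × P) : (e₁ * e₂) v = e₁ (e₂ v) := rfl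

/-- additivity in the functional -/
lemma trv_mul_trv_fun (p : A × P) (F₁ F₂ : (A × P) →ₗ[A] A) (h₁ : F₁ p = 0) (h₂ : F₂ p = 0) :
    trv p F₁ h₁ * trv p F₂ h₂ = trv p (F₁ + F₂) (by simp [h₁, h₂]) := by
  apply LinearEquiv.ext; intro v
  simp [mul_apply, h₁, add_smul]
  abel

/-- additivity in the point -/
lemma trv_mul_trv_pt (z₁ z₂ : A × P) (F : (A × P) →ₗ[A] A) (h₁ : F z₁ = 0) (h₂ : F z₂ = 0) :
    trv z₁ F h₁ * trv z₂ F h₂ = trv (z₁ + z₂) F (by simp [h₁, h₂]) := by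
  apply LinearEquiv.ext; intro v
  simp [mul_apply, h₂, smul_add]
  abel

end ELtool

namespace ELtool

open LinearMap

/-- the functional `(x,q) ↦ ρ q` -/
def fn2 (ρ : P →ₗ[A] A) : (A × P) →ₗ[A] A := ρ.comp (LinearMap.snd A A P)

@[simp] lemma fn2_apply (ρ : P →ₗ[A] A) (x : A) (q : P) : fn2 ρ (x, q) = ρ q := rfl

/-- the functional `(x,q) ↦ x` -/
def fn1 : (A × P) →ₗ[A] A := LinearMap.fst A A P

@[simp] lemma fn1_apply (x : A) (q : P) : (fn1 : (A × P) →ₗ[A] A) (x, q) = x := rfl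

/-- Δ-type generator: `(x,q) ↦ (x + ρ q, q)` as trv at point `(α, 0)`. -/
lemma delta_mem (α : A) (ρ : P →ₗ[A] A) :
    trv ((α, (0:P))) (fn2 ρ) (by simp) ∈ ELgroup A P := by
  apply Subgroup.subset_closure
  left
  refine ⟨α, ρ, fun x q => ?_⟩
  show (x, q) + (ρ q) • ((α, (0:P))) = _
  simp [Prod.ext_iff, mul_comm]

/-- Γ-type generator: `(x,q) ↦ (x, q + x • n)`. -/
lemma gamma_mem (n : P) :
    trv (((0:A), n)) fn1 (by simp) ∈ ELgroup A P := by
  apply Subgroup.subset_closure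
  right
  refine ⟨n, fun x q => ?_⟩
  show (x, q) + x • (((0:A), n)) = _
  simp [Prod.ext_iff]

/-- E-type: `(x,q) ↦ (x, q + ρ(q) • μ)` with `ρ μ = 0`, as a commutator. -/
lemma E_mem (μ : P) (ρ : P →ₗ[A] A) (hρμ : ρ μ = 0) :
    trv (((0:A), μ)) (fn2 ρ) (by simp [hρμ]) ∈ ELgroup A P := by
  set Γ := trv (((0:A), μ)) fn1 (fn1_apply 0 μ) with hΓ
  set Δ := trv (((1:A), (0:P))) (fn2 ρ) (by simp) with hΔ
  have key : trv (((0:A), μ)) (fn2 ρ) (by simp [hρμ]) * (Δ * Γ) = Γ * Δ := by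
    apply LinearEquiv.ext
    rintro ⟨x, q⟩
    simp [mul_apply, hΓ, hΔ, Prod.ext_iff, hρμ, smul_add, add_smul]
    abel
  have : trv (((0:A), μ)) (fn2 ρ) (by simp [hρμ]) = (Γ * Δ) * (Δ * Γ)⁻¹ := by
    rw [← key]; group
  rw [this]
  exact mul_mem (mul_mem (gamma_mem μ) (delta_mem 1 ρ))
    (inv_mem (mul_mem (delta_mem 1 ρ) (gamma_mem μ)))

/-- T5: transvection with functional of the shape `(0, ρ)` at any point `(α, μ)` with `ρ μ = 0`. -/
lemma T5_mem (α : A) (μ : P) (ρ : P →ₗ[A] A) (hρμ : ρ μ = 0) :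
    trv ((α, μ)) (fn2 ρ) (by simp [hρμ]) ∈ ELgroup A P := by
  have hsplit := trv_mul_trv_pt ((α, (0:P))) (((0:A), μ)) (fn2 ρ) (by simp) (by simp [hρμ])
  have : trv ((α, μ)) (fn2 ρ) (by simp [hρμ])
      = trv ((α, (0:P))) (fn2 ρ) (by simp) * trv (((0:A), μ)) (fn2 ρ) (by simp [hρμ]) := by
    rw [hsplit]; apply trv_ext; intro v; simp
  rw [this]
  exact mul_mem (delta_mem α ρ) (E_mem μ ρ hρμ)

/-- T4: transvection at a point `(0, n)` with arbitrary functional `F`, `F (0,n) = 0`. -/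
lemma T4_mem (n : P) (F : (A × P) →ₗ[A] A) (h : F ((0:A), n) = 0) :
    trv (((0:A), n)) F h ∈ ELgroup A P := by
  -- F = b • fn1 + fn2 ψ  with b = F (1,0), ψ = F ∘ inr
  set b := F ((1:A), (0:P)) with hb
  set ψ := F.comp (LinearMap.inr A A P) with hψ
  have hdecomp : F = b • fn1 + fn2 ψ := by
    apply LinearMap.ext
    rintro ⟨x, q⟩
    have : (x, q) = x • ((1:A), (0:P)) + ((0:A), q) := by simp [Prod.ext_iff]
    rw [this, map_add, map_smul]
    simp [hψ, mul_comm]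
    rfl
  have hψn : ψ n = 0 := by simpa [hψ] using h
  have hsplit := trv_mul_trv_fun (((0:A), n)) (b • fn1) (fn2 ψ) (by simp) (by simp [hψn])
  have : trv (((0:A), n)) F h
      = trv (((0:A), n)) (b • fn1) (by simp) * trv (((0:A), n)) (fn2 ψ) (by simp [hψn]) := by
    rw [hsplit]; apply trv_ext; intro v; rw [hdecomp]
  rw [this]
  refine mul_mem ?_ (E_mem n ψ hψn)
  -- b • fn1 at (0,n) equals fn1 at (0, b • n)
  have : trv (((0:A), n)) (b • fn1) (by simp) = trv (((0:A), b • n)) fn1 (by simp) := by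
    apply trv_ext
    rintro v
    simp [Prod.ext_iff, smul_smul, mul_comm, smul_comm]
  rw [this]
  exact gamma_mem _

/-- Key commutator lemma: if `ω p = 0`, `ω z = 0`, `ζ p = 0`, `F z₀ ...`
`trv p ((ζ z) • ω)` is a commutator of `trv p ζ` and `trv z ω`. -/
lemma KL (p z : A × P) (ζ ω : (A × P) →ₗ[A] A)
    (hζp : ζ p = 0) (hωz : ω z = 0) (hωp : ω p = 0)
    (hX : trv p ζ hζp ∈ ELgroup A P) (hY : trv z ω hωz ∈ ELgroup A P) :
    trv p ((ζ z) • ω) (by simp [hωp]) ∈ ELgroup A P := by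
  set X := trv p ζ hζp
  set Y := trv z ω hωz
  have key : trv p ((ζ z) • ω) (by simp [hωp]) * (Y * X) = X * Y := by
    apply LinearEquiv.ext
    intro v
    simp [X, Y, mul_apply, hζp, hωp, hωz, map_add, map_smul, smul_add, smul_smul]
    module
  have : trv p ((ζ z) • ω) (by simp [hωp]) = (X * Y) * (Y * X)⁻¹ := by rw [← key]; group
  rw [this]
  exact mul_mem (mul_mem hX hY) (inv_mem (mul_mem hY hX))

end ELtool

namespace ELtool

lemma trv_smul (c : A) (p : A × P) (F : (A × P) →ₗ[A] A) (h : F p = 0) :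
    trv p (c • F) (by simp [h]) = trv (c • p) F (by simp [h]) := by
  apply trv_ext; intro v
  simp [smul_smul, mul_comm, smul_comm]

lemma F_decomp (F : (A × P) →ₗ[A] A) (x : A) (q : P) :
    F (x, q) = x * F ((1:A), (0:P)) + F ((0:A), q) := by
  have : ((x, q) : A × P) = x • ((1:A), (0:P)) + ((0:A), q) := by simp [Prod.ext_iff]
  rw [this, map_add, map_smul, smul_eq_mul]

/-- **U₁ certificate**: for any transvection data `F (a,m) = 0` and any
`χ', χ̃, v` with `χ̃ m = 0`, the coefficient `λ (χ' m)² (χ̃ v)` is certified. -/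
lemma U1 (a : A) (m : P) (F : (A × P) →ₗ[A] A) (hF : F (a, m) = 0)
    (χ' χt : P →ₗ[A] A) (v : P) (hχt : χt m = 0) (lam : A) :
    trv (a, m) ((lam * (χ' m * χ' m) * χt v) • F) (by simp [hF]) ∈ ELgroup A P := by
  set b := F ((1:A), (0:P)) with hb
  set e := χ' m with he
  have hab : a * b + F ((0:A), m) = 0 := by rw [← F_decomp]; exact hF
  -- the T5 part
  set ρ : P →ₗ[A] A := (lam * e * χt v) • (e • (F.comp (LinearMap.inr A A P)) + (a*b) • χ')
    with hρ
  have hρm : ρ m = 0 := by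
    have h2 : F.comp (LinearMap.inr A A P) m = F ((0:A), m) := rfl
    have h3 : F ((0:A), m) = -(a*b) := by linear_combination hab
    simp [hρ, h2, h3, he]
    ring
  -- the KL part
  set ζ : (A × P) →ₗ[A] A := fn2 χt with hζ
  set z : A × P := ((0:A), e • v - χ' v • m) with hz
  set ω : (A × P) →ₗ[A] A := (-(lam * b)) • (a • fn2 χ' - e • fn1) with hω
  have hζp : ζ (a, m) = 0 := by simp [hζ, hχt]
  have hωp : ω (a, m) = 0 := by simp [hω, he]; ring
  have hωz : ω z = 0 := by simp [hω, hz, he]; ring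
  have hζz : ζ z = e * χt v := by simp [hζ, hz, he, hχt, mul_comm]
  -- main identity
  have hkey : (lam * (e * e) * χt v) • F = fn2 ρ + (ζ z) • ω := by
    apply LinearMap.ext
    rintro ⟨x, q⟩
    rw [LinearMap.add_apply]
    simp only [LinearMap.smul_apply, smul_eq_mul, fn2_apply, hρ, hζz, hω]
    rw [F_decomp F x q]
    have : F.comp (LinearMap.inr A A P) q = F ((0:A), q) := rfl
    simp only [LinearMap.smul_apply, LinearMap.add_apply, LinearMap.sub_apply, smul_eq_mul,
      fn2_apply, fn1_apply, this, ← hb]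
    ring
  have goal_eq : trv (a, m) ((lam * (χ' m * χ' m) * χt v) • F) (by simp [hF])
      = trv (a, m) (fn2 ρ) (by simp [hρm]) * trv (a, m) ((ζ z) • ω) (by simp [hωp]) := by
    rw [trv_mul_trv_fun]
    apply trv_ext; intro u
    rw [← he, ← hkey]
  rw [goal_eq]
  refine mul_mem (T5_mem a m ρ hρm) ?_
  exact KL (a, m) z ζ ω hζp hωz hωp (T5_mem a m χt hχt) (T4_mem _ ω hωz)

/-- **U₂ certificate** (mirror): for `F (a,m) = 0`, `w, ξ, n` with `F (0,n) = 0`,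
the coefficient `λ (F(0,w))² (ξ n)` is certified. -/
lemma U2 (a : A) (m : P) (F : (A × P) →ₗ[A] A) (hF : F (a, m) = 0)
    (w : P) (ξ : P →ₗ[A] A) (n : P) (hn : F ((0:A), n) = 0) (lam : A) :
    trv (a, m) ((lam * (F ((0:A), w) * F ((0:A), w)) * ξ n) • F) (by simp [hF]) ∈ ELgroup A P := by
  set b := F ((1:A), (0:P)) with hb
  set e := F ((0:A), w) with he
  have hab : a * b + F ((0:A), m) = 0 := by rw [← F_decomp]; exact hF
  set c : A := lam * (e * e) * ξ n with hc
  -- two points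
  set z₁ : A × P := ((0:A), (lam * e * ξ n) • (e • m + (a*b) • w)) with hz₁
  set u : A × P := ((lam * a * e), (-(lam * a * b)) • w) with hu
  have hFz₁ : F z₁ = 0 := by
    have : F ((0:A), e • m + (a*b) • w) = e • F ((0:A), m) + (a*b) • F ((0:A), w) := by
      rw [← map_smul, ← map_smul, ← map_add]
      simp [Prod.ext_iff]
    have h3 : F ((0:A), m) = -(a*b) := by linear_combination hab
    have : F z₁ = (lam * e * ξ n) • (e • F ((0:A), m) + (a*b) • F ((0:A), w)) := by
      rw [hz₁]
      rw [show (((0:A), (lam * e * ξ n) • (e • m + (a*b) • w)) : A × P)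
          = (lam * e * ξ n) • (((0:A), e • m + (a*b) • w) : A × P) by simp [Prod.ext_iff],
        map_smul, this]
    rw [this, h3, ← he]
    simp; ring
  have hFu : F u = 0 := by
    have : (u : A × P) = (lam * a * e) • ((1:A), (0:P)) + (-(lam*a*b)) • ((0:A), w) := by
      simp [hu, Prod.ext_iff]
    rw [this, map_add, map_smul, map_smul, ← hb, ← he]
    simp; ring
  -- KL at u
  set χv : P →ₗ[A] A := e • ξ - (ξ w) • (F.comp (LinearMap.inr A A P)) with hχv
  set ζ : (A × P) →ₗ[A] A := fn2 χv with hζ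
  have hψw : F.comp (LinearMap.inr A A P) w = e := rfl
  have hψn : F.comp (LinearMap.inr A A P) n = 0 := hn
  have hχvw0 : χv w = 0 := by
    have : χv w = e * ξ w - ξ w * (F.comp (LinearMap.inr A A P)) w := by
      simp [hχv, mul_comm]
    rw [this, hψw]; ring
  have hχvw : χv ((-(lam * a * b)) • w) = 0 := by
    rw [map_smul, hχvw0, smul_zero]
  have hζu : ζ u = 0 := by
    show χv ((-(lam * a * b)) • w) = 0
    exact hχvw
  have hζz : ζ ((0:A), n) = e * ξ n := by
    show χv n = e * ξ n
    have : χv n = e * ξ n - ξ w * (F.comp (LinearMap.inr A A P)) n := by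
      simp [hχv, mul_comm]
    rw [this, hψn]; ring
  have hXmem : trv u ζ hζu ∈ ELgroup A P := by
    have h5 := T5_mem (lam * a * e) ((-(lam * a * b)) • w) χv hχvw
    exact h5
  have hKL : trv u ((ζ ((0:A), n)) • F) (by simp [hFu]) ∈ ELgroup A P :=
    KL u ((0:A), n) ζ F hζu hn hFu hXmem (T4_mem n F hn)
  -- convert to point form: trv u ((e * ξ n) • F) = trv ((e * ξ n) • u) F
  rw [show (ζ (((0:A), n) : A × P)) = e * ξ n from hζz] at hKL
  rw [trv_smul (e * ξ n) u F hFu] at hKL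
  -- final assembly: c • (a, m) = z₁ + (e * ξ n) • u
  have hpt : c • ((a, m) : A × P) = z₁ + (e * ξ n) • u := by
    simp only [hc, hz₁, hu, Prod.smul_mk, Prod.mk_add_mk, Prod.ext_iff, smul_eq_mul,
      smul_add, smul_smul]
    constructor
    · ring
    · module
  have goal_eq : trv (a, m) (c • F) (by simp [hF])
      = trv z₁ F hFz₁ * trv ((e * ξ n) • u) F (by simp [hFu]) := by
    rw [trv_mul_trv_pt z₁ ((e * ξ n) • u) F hFz₁ (by simp [hFu])]
    rw [trv_smul c (a, m) F hF]
    apply trv_ext; intro v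
    rw [hpt]
  rw [goal_eq]
  exact mul_mem (T4_mem _ F hFz₁) hKL

end ELtool

namespace ELtool

lemma trv_zero (p : A × P) : trv p (0 : (A × P) →ₗ[A] A) (by simp) = 1 := by
  apply LinearEquiv.ext; intro v
  show v + (0 : (A × P) →ₗ[A] A) v • p = v
  simp

lemma smul_vanish (c : A) (G : (A × P) →ₗ[A] A) (p : A × P) (h : G p = 0) : (c • G) p = 0 := by
  simp [h]

lemma Fexp_G (n : P) (F : (A × P) →ₗ[A] A) (x : A) (q : P) :
    F (x, q + x • n) = F (x, q) + x * F ((0:A), n) := by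
  have h1 : ((x, q + x • n) : A × P) = (x, q) + x • (((0:A), n) : A × P) := by
    simp [Prod.ext_iff]
  rw [h1, map_add, map_smul, smul_eq_mul]

lemma Fexp_D (χ : P →ₗ[A] A) (F : (A × P) →ₗ[A] A) (x : A) (q : P) :
    F (x + χ q, q) = F (x, q) + (χ q) * F ((1:A), (0:P)) := by
  have h1 : ((x + χ q, q) : A × P) = (x, q) + (χ q) • (((1:A), (0:P)) : A × P) := by
    simp [Prod.ext_iff]
  rw [h1, map_add, map_smul, smul_eq_mul]

lemma shiftG_vanish (n : P) (p : A × P) (F : (A × P) →ₗ[A] A) (hF : F p = 0) :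
    (F - F ((0:A), n) • fn1 : (A × P) →ₗ[A] A) (p + p.1 • (((0:A), n) : A × P)) = 0 := by
  rcases p with ⟨a, m⟩
  have h1 : ((a, m) : A × P) + a • (((0:A), n) : A × P) = ((a, m + a • n) : A × P) := by
    simp [Prod.ext_iff]
  rw [LinearMap.sub_apply, LinearMap.smul_apply, smul_eq_mul, h1]
  rw [Fexp_G n F a m, hF]
  rw [show (fn1 : (A × P) →ₗ[A] A) ((a, m + a • n) : A × P) = a from rfl]
  ring

lemma shiftD_vanish' (χ : P →ₗ[A] A) (p : A × P) (F : (A × P) →ₗ[A] A) (hF : F p = 0) :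
    (F - F ((1:A), (0:P)) • fn2 χ : (A × P) →ₗ[A] A) (p + (χ p.2) • (((1:A), (0:P)) : A × P)) = 0 := by
  rcases p with ⟨a, m⟩
  have h1 : ((a, m) : A × P) + (χ m) • (((1:A), (0:P)) : A × P) = ((a + χ m, m) : A × P) := by
    simp [Prod.ext_iff]
  rw [LinearMap.sub_apply, LinearMap.smul_apply, smul_eq_mul, h1]
  rw [Fexp_D χ F a m, hF]
  rw [show (fn2 χ : (A × P) →ₗ[A] A) ((a + χ m, m) : A × P) = χ m from rfl]
  ring

lemma trv_conj (σ : (A × P) ≃ₗ[A] (A × P)) (p : A × P) (F : (A × P) →ₗ[A] A) (h : F p = 0) :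
    σ * trv p F h * σ⁻¹
      = trv (σ p) (F.comp (σ.symm : (A × P) →ₗ[A] (A × P)))
          (by simpa using h) := by
  apply LinearEquiv.ext; intro v
  have h1 : (σ * trv p F h * σ⁻¹) v = σ ((trv p F h) (σ.symm v)) := rfl
  rw [h1]
  simp only [trv_apply, map_add, map_smul, LinearMap.coe_comp, Function.comp_apply,
    LinearEquiv.coe_coe, LinearEquiv.apply_symm_apply]

/-- Conjugation by `Γ_n` : membership transfer. -/
lemma conjGamma (n : P) (p : A × P) (F : (A × P) →ₗ[A] A) (hF : F p = 0) (c : A) :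
    (trv p (c • F) (smul_vanish c F p hF) ∈ ELgroup A P) ↔
    (trv (p + p.1 • ((0:A), n)) (c • (F - F ((0:A), n) • fn1))
      (smul_vanish c _ _ (shiftG_vanish n p F hF)) ∈ ELgroup A P) := by
  set Γ := trv (((0:A), n)) fn1 (fn1_apply 0 n) with hΓdef
  have hσp : Γ p = p + p.1 • (((0:A), n) : A × P) := by
    rw [hΓdef]; rcases p with ⟨a, m⟩; simp
  have hσF : (c • F).comp (Γ.symm : (A × P) →ₗ[A] (A × P))
      = c • (F - F ((0:A), n) • fn1) := by
    apply LinearMap.ext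
    rintro ⟨x, q⟩
    have hsymm : Γ.symm (x, q) = (x, q) - x • (((0:A), n) : A × P) := by
      rw [hΓdef]
      show (trv (((0:A), n)) fn1 (by simp)).symm (x, q) = _
      have : (trv (((0:A), n)) fn1 (by simp)).symm (x, q)
          = (x, q) - (fn1 : (A × P) →ₗ[A] A) (x, q) • (((0:A), n) : A × P) := rfl
      rw [this]; simp
    simp only [LinearMap.coe_comp, Function.comp_apply, LinearEquiv.coe_coe, hsymm,
      LinearMap.smul_apply, LinearMap.sub_apply, smul_eq_mul, map_sub, map_smul, fn1_apply]
    ring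
  have hconj := trv_conj Γ p (c • F) (smul_vanish c F p hF)
  have hEq : trv (Γ p) ((c • F).comp (Γ.symm : (A × P) →ₗ[A] (A × P)))
        (by simpa using smul_vanish c F p hF)
      = trv (p + p.1 • ((0:A), n)) (c • (F - F ((0:A), n) • fn1))
        (smul_vanish c _ _ (shiftG_vanish n p F hF)) := by
    apply trv_ext; intro v; rw [hσF, hσp]
  rw [hEq] at hconj
  constructor
  · intro h
    rw [show trv (p + p.1 • ((0:A), n)) (c • (F - F ((0:A), n) • fn1))
          (smul_vanish c _ _ (shiftG_vanish n p F hF))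
        = Γ * trv p (c • F) (smul_vanish c F p hF) * Γ⁻¹ from hconj.symm]
    exact mul_mem (mul_mem (gamma_mem n) h) (inv_mem (gamma_mem n))
  · intro h
    have h2 : trv p (c • F) (smul_vanish c F p hF)
        = Γ⁻¹ * (Γ * trv p (c • F) (smul_vanish c F p hF) * Γ⁻¹) * Γ := by group
    rw [h2, hconj]
    exact mul_mem (mul_mem (inv_mem (gamma_mem n)) h) (gamma_mem n)

/-- Conjugation by `Δ_χ` : membership transfer. -/
lemma conjDelta (χ : P →ₗ[A] A) (p : A × P) (F : (A × P) →ₗ[A] A) (hF : F p = 0) (c : A) :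
    (trv p (c • F) (smul_vanish c F p hF) ∈ ELgroup A P) ↔
    (trv (p + (χ p.2) • (((1:A), (0:P)) : A × P)) (c • (F - F ((1:A), (0:P)) • fn2 χ))
      (smul_vanish c _ _ (shiftD_vanish' χ p F hF)) ∈ ELgroup A P) := by
  set Δ := trv (((1:A), (0:P))) (fn2 χ) (by simp) with hΔdef
  have hσp : Δ p = p + (χ p.2) • (((1:A), (0:P)) : A × P) := by
    rw [hΔdef]; rcases p with ⟨a, m⟩; simp
  have hσF : (c • F).comp (Δ.symm : (A × P) →ₗ[A] (A × P))
      = c • (F - F ((1:A), (0:P)) • fn2 χ) := by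
    apply LinearMap.ext
    rintro ⟨x, q⟩
    have hsymm : Δ.symm (x, q) = (x, q) - (χ q) • (((1:A), (0:P)) : A × P) := by
      rw [hΔdef]
      show (trv (((1:A), (0:P))) (fn2 χ) (by simp)).symm (x, q) = _
      have : (trv (((1:A), (0:P))) (fn2 χ) (by simp)).symm (x, q)
          = (x, q) - (fn2 χ : (A × P) →ₗ[A] A) (x, q) • (((1:A), (0:P)) : A × P) := rfl
      rw [this]; simp
    simp only [LinearMap.coe_comp, Function.comp_apply, LinearEquiv.coe_coe, hsymm,
      LinearMap.smul_apply, LinearMap.sub_apply, smul_eq_mul, map_sub, map_smul, fn2_apply]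
    ring
  have hconj := trv_conj Δ p (c • F) (smul_vanish c F p hF)
  have hEq : trv (Δ p) ((c • F).comp (Δ.symm : (A × P) →ₗ[A] (A × P)))
        (by simpa using smul_vanish c F p hF)
      = trv (p + (χ p.2) • (((1:A), (0:P)) : A × P)) (c • (F - F ((1:A), (0:P)) • fn2 χ))
        (smul_vanish c _ _ (shiftD_vanish' χ p F hF)) := by
    apply trv_ext; intro v; rw [hσF, hσp]
  rw [hEq] at hconj
  constructor
  · intro h
    rw [show trv (p + (χ p.2) • (((1:A), (0:P)) : A × P)) (c • (F - F ((1:A), (0:P)) • fn2 χ))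
          (smul_vanish c _ _ (shiftD_vanish' χ p F hF))
        = Δ * trv p (c • F) (smul_vanish c F p hF) * Δ⁻¹ from hconj.symm]
    exact mul_mem (mul_mem (delta_mem 1 χ) h) (inv_mem (delta_mem 1 χ))
  · intro h
    have h2 : trv p (c • F) (smul_vanish c F p hF)
        = Δ⁻¹ * (Δ * trv p (c • F) (smul_vanish c F p hF) * Δ⁻¹) * Δ := by group
    rw [h2, hconj]
    exact mul_mem (mul_mem (inv_mem (delta_mem 1 χ)) h) (delta_mem 1 χ)

/-- The ideal of certified coefficients. -/
def coefIdeal (p : A × P) (F : (A × P) →ₗ[A] A) (hF : F p = 0) : Ideal A where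
  carrier := {s | ∀ lam : A, trv p ((lam * s) • F) (by simp [hF]) ∈ ELgroup A P}
  zero_mem' := by
    intro lam
    have : ((lam * 0) • F : (A × P) →ₗ[A] A) = 0 := by simp
    rw [show trv p ((lam * 0) • F) (by simp [hF]) = trv p 0 (by simp) from
      trv_ext (by simp [this])]
    rw [trv_zero]
    exact one_mem _
  add_mem' := by
    intro s t hs ht lam
    have := mul_mem (hs lam) (ht lam)
    rw [trv_mul_trv_fun p _ _ (by simp [hF]) (by simp [hF])] at this
    have heq : ((lam * s) • F + (lam * t) • F : (A × P) →ₗ[A] A) = (lam * (s + t)) • F := by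
      rw [← add_smul]; ring_nf
    rwa [show trv p ((lam * s) • F + (lam * t) • F) (by simp [hF])
        = trv p ((lam * (s + t)) • F) (by simp [hF]) from trv_ext (by simp [heq])] at this
  smul_mem' := by
    intro c s hs lam
    have := hs (lam * c)
    rwa [show trv p ((lam * c * s) • F) (by simp [hF])
        = trv p ((lam * (c • s)) • F) (by simp [hF]) from trv_ext (by
          simp [smul_eq_mul, mul_assoc])] at this

lemma coefIdeal_top (p : A × P) (F : (A × P) →ₗ[A] A) (hF : F p = 0)
    (h : coefIdeal p F hF = ⊤) : trv p F hF ∈ ELgroup A P := by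
  have h1 : (1 : A) ∈ coefIdeal p F hF := h ▸ Submodule.mem_top
  have := h1 1
  rwa [show trv p ((1 * 1 : A) • F) (by simp [hF]) = trv p F hF from trv_ext (by simp)] at this

end ELtool


namespace ELtool

lemma trv_coef (p : A × P) (F : (A × P) →ₗ[A] A) (hF : F p = 0) {s t : A} (hst : s = t)
    (h1 : (s • F) p = 0) (h2 : (t • F) p = 0) :
    trv p (s • F) h1 = trv p (t • F) h2 := trv_ext (by rw [hst]; exact fun _ => rfl)

end ELtool

section LocPack

lemma exists_unit_term {R : Type*} [CommRing R] [IsLocalRing R] {n : ℕ} (f : Fin n → R)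
    (h : IsUnit (∑ i, f i)) : ∃ i, IsUnit (f i) := by
  by_contra hc
  push_neg at hc
  have hmem : (∑ i, f i) ∈ IsLocalRing.maximalIdeal R :=
    Ideal.sum_mem _ (fun i _ => (IsLocalRing.mem_maximalIdeal _).2 (hc i))
  exact (IsLocalRing.mem_maximalIdeal _).1 hmem h

lemma unit_step {R : Type*} [CommRing R] [IsLocalRing R] (x y : R) (hy : IsUnit y) :
    IsUnit (x + y) ∨ IsUnit (x + 2*y) := by
  by_contra hc
  push_neg at hc
  have h1 : (x + y) ∈ IsLocalRing.maximalIdeal R := (IsLocalRing.mem_maximalIdeal _).2 hc.1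
  have h2 : (x + 2*y) ∈ IsLocalRing.maximalIdeal R := (IsLocalRing.mem_maximalIdeal _).2 hc.2
  have : y ∈ IsLocalRing.maximalIdeal R := by
    have := Ideal.sub_mem _ h2 h1
    simpa [two_mul] using this
  exact (IsLocalRing.mem_maximalIdeal _).1 this hy

variable {A : Type} [CommRing A] {P : Type} [AddCommGroup P] [Module A P]
  [Module.Finite A P] [Module.Projective A P]

variable (𝔪 : Ideal A) [𝔪.IsMaximal] {r : ℕ}

local notation "S" => 𝔪.primeCompl
local notation "Aₘ" => Localization.AtPrime 𝔪
local notation "Pₘ" => LocalizedModule 𝔪.primeCompl P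
local notation "mkP" => LocalizedModule.mkLinearMap 𝔪.primeCompl P
local notation "ΦP" => IsLocalizedModule.mapExtendScalars 𝔪.primeCompl
  (LocalizedModule.mkLinearMap 𝔪.primeCompl P) (Algebra.linearMap A Aₘ) Aₘ

omit [Module.Finite A P] [Module.Projective A P] in
lemma Phi_apply (χ : P →ₗ[A] A) (q : P) :
    ΦP χ (mkP q) = algebraMap A Aₘ (χ q) := by
  simp only [IsLocalizedModule.mapExtendScalars_apply_apply]
  rw [IsLocalizedModule.map_apply]
  rfl

lemma unit_notmem {x : A} (h : IsUnit (algebraMap A Aₘ x)) : x ∉ 𝔪 :=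
  (IsLocalization.AtPrime.isUnit_to_map_iff Aₘ 𝔪 x).1 h

lemma notmem_unit {x : A} (h : x ∉ 𝔪) : IsUnit (algebraMap A Aₘ x) :=
  (IsLocalization.AtPrime.isUnit_to_map_iff Aₘ 𝔪 x).2 h

lemma unit_S (s : S) : IsUnit (algebraMap A Aₘ (s : A)) :=
  IsLocalization.map_units Aₘ s

lemma kill_of_zero {x : A} (h : algebraMap A Aₘ x = 0) : ∃ s : S, (s : A) * x = 0 := by
  have h2 : algebraMap A Aₘ x = algebraMap A Aₘ 0 := by simpa using h
  obtain ⟨c, hc⟩ := (IsLocalization.eq_iff_exists S Aₘ).1 h2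
  exact ⟨c, by simpa using hc⟩

/-- decomposition of a localized functional along the free coordinates -/
lemma beta_decomp (g : Pₘ ≃ₗ[Aₘ] (Fin r → Aₘ)) (β : Pₘ →ₗ[Aₘ] Aₘ) (y : Pₘ) :
    β y = ∑ i, (g y i) * β (g.symm (Pi.single i 1)) := by
  have hy : g y = ∑ i, (g y i) • Pi.single i (1:Aₘ) := by
    funext j
    simp [Pi.single_apply]
  conv_lhs => rw [← g.symm_apply_apply y, hy]
  rw [map_sum, map_sum]
  congr 1
  funext i
  rw [map_smul, map_smul, smul_eq_mul]

/-- L1: from `χ' m ∉ 𝔪` produce an exact annihilator of `m` with value outside `𝔪`. -/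
lemma locL1 (hr : 2 ≤ r) (g : Pₘ ≃ₗ[Aₘ] (Fin r → Aₘ)) (m : P) (χ' : P →ₗ[A] A)
    (hχ' : χ' m ∉ 𝔪) :
    ∃ (χt : P →ₗ[A] A) (v : P), χt m = 0 ∧ χt v ∉ 𝔪 := by
  haveI : Module.FinitePresentation A P := Module.finitePresentation_of_projective A P
  set u : Fin r → Aₘ := g (mkP m) with hu
  set eb : Fin r → Pₘ := fun i => g.symm (Pi.single i 1) with heb
  have hεe : ∀ i j : Fin r, ((LinearMap.proj i).comp (g : Pₘ →ₗ[Aₘ] (Fin r → Aₘ))) (eb j)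
      = if i = j then 1 else 0 := by
    intro i j
    simp [heb, Pi.single_apply]
  -- find a unit coordinate
  have hunit : IsUnit (∑ i, (u i) * (ΦP χ' (eb i))) := by
    rw [← beta_decomp 𝔪 g (ΦP χ') (mkP m)]
    rw [Phi_apply]
    exact notmem_unit 𝔪 hχ'
  obtain ⟨i₀, hi₀⟩ := exists_unit_term _ hunit
  have hui₀ : IsUnit (u i₀) := isUnit_of_mul_isUnit_left hi₀
  -- pick j ≠ i₀
  have h0r : 0 < r := by omega
  have h1r : 1 < r := by omega
  set j : Fin r := if (i₀ : ℕ) = 0 then ⟨1, h1r⟩ else ⟨0, h0r⟩ with hj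
  have hji : j ≠ i₀ := by
    rcases Nat.eq_zero_or_pos (i₀ : ℕ) with h | h
    · simp only [hj, h, if_pos]
      intro hc
      have := congrArg (Fin.val) hc
      simp [h] at this
    · simp only [hj, if_neg (Nat.pos_iff_ne_zero.1 h)]
      intro hc
      have := congrArg (Fin.val) hc
      simp at this
      omega
  -- the local annihilator functional
  set εj : Pₘ →ₗ[Aₘ] Aₘ := (LinearMap.proj j).comp (g : Pₘ →ₗ[Aₘ] (Fin r → Aₘ)) with hεj
  set εi : Pₘ →ₗ[Aₘ] Aₘ := (LinearMap.proj i₀).comp (g : Pₘ →ₗ[Aₘ] (Fin r → Aₘ)) with hεi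
  set χtl : Pₘ →ₗ[Aₘ] Aₘ := (u i₀) • εj - (u j) • εi with hχtl
  have hχtlm : χtl (mkP m) = 0 := by
    rw [hχtl]
    simp only [LinearMap.sub_apply, LinearMap.smul_apply, smul_eq_mul]
    rw [show εj (mkP m) = u j from rfl, show εi (mkP m) = u i₀ from rfl]
    ring
  have hεjj : εj (eb j) = (1:Aₘ) := by rw [hεj, hεe]; simp
  have hεij : εi (eb j) = (0:Aₘ) := by
    rw [hεi, hεe]
    rw [if_neg (fun h => hji h.symm)]
  have hχtle : χtl (eb j) = u i₀ := by
    rw [hχtl]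
    simp only [LinearMap.sub_apply, LinearMap.smul_apply, smul_eq_mul]
    rw [hεjj, hεij]
    ring
  -- clear denominators
  obtain ⟨⟨χ₁, s₁⟩, hs₁⟩ := IsLocalizedModule.surj S ΦP χtl
  obtain ⟨s₂, hs₂⟩ : ∃ s : S, (s : A) * (χ₁ m) = 0 := by
    apply kill_of_zero
    rw [← Phi_apply, ← hs₁, LinearMap.smul_apply, hχtlm, smul_zero]
  obtain ⟨⟨v₀, s₃⟩, hs₃⟩ := IsLocalizedModule.surj S mkP (eb j)
  refine ⟨(s₂ : A) • χ₁, v₀, by simp [hs₂], ?_⟩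
  apply unit_notmem 𝔪
  have hval : algebraMap A Aₘ (((s₂ : A) • χ₁) v₀)
      = algebraMap A Aₘ (s₂:A) * (algebraMap A Aₘ (s₁:A) * (algebraMap A Aₘ (s₃:A) * u i₀)) := by
    rw [show (((s₂ : A) • χ₁) v₀) = (s₂:A) * (χ₁ v₀) by simp, map_mul]
    congr 1
    rw [← Phi_apply 𝔪 χ₁ v₀, ← hs₁, LinearMap.smul_apply, Submonoid.smul_def,
      ← algebraMap_smul Aₘ (s₁:A), smul_eq_mul]
    congr 1
    rw [← hs₃, Submonoid.smul_def, ← algebraMap_smul Aₘ (s₃:A) (eb j), map_smul, hχtle,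
      smul_eq_mul]
  rw [hval]
  exact ((unit_S 𝔪 s₂).mul ((unit_S 𝔪 s₁).mul ((unit_S 𝔪 s₃).mul hui₀)))

/-- L2: from `a ∉ 𝔪` produce a Γ-shift making `m + a • n` detectable. -/
lemma locL2 (hr : 2 ≤ r) (g : Pₘ ≃ₗ[Aₘ] (Fin r → Aₘ)) (m : P) (a : A) (ha : a ∉ 𝔪) :
    ∃ (n : P) (χ : P →ₗ[A] A), χ (m + a • n) ∉ 𝔪 := by
  haveI : Module.FinitePresentation A P := Module.finitePresentation_of_projective A P
  have h0r : 0 < r := by omega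
  set i0 : Fin r := ⟨0, h0r⟩ with hi0
  set eb0 : Pₘ := g.symm (Pi.single i0 1) with heb0
  set ε0 : Pₘ →ₗ[Aₘ] Aₘ := (LinearMap.proj i0).comp (g : Pₘ →ₗ[Aₘ] (Fin r → Aₘ)) with hε0
  have hε0eb : ε0 eb0 = 1 := by
    rw [hε0, heb0]
    simp [Pi.single_apply]
  obtain ⟨⟨n₀, s₀⟩, hs₀⟩ := IsLocalizedModule.surj S mkP eb0
  set u0 : Aₘ := ε0 (mkP m) with hu0
  set y : Aₘ := algebraMap A Aₘ a * algebraMap A Aₘ (s₀ : A) with hy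
  have hyu : IsUnit y := (notmem_unit 𝔪 ha).mul (unit_S 𝔪 s₀)
  have hval : ∀ k : A, ε0 (mkP (m + (k * a) • n₀)) = u0 + algebraMap A Aₘ k * y := by
    intro k
    rw [map_add, map_smul,
      ← algebraMap_smul Aₘ (k*a) ((LocalizedModule.mkLinearMap 𝔪.primeCompl P) n₀),
      map_add, map_smul, smul_eq_mul]
    congr 1
    rw [← hs₀, Submonoid.smul_def, ← algebraMap_smul Aₘ (s₀ : A) eb0, map_smul, hε0eb,
      smul_eq_mul, mul_one, hy, map_mul]
    ring
  have hkex : ∃ k : A, IsUnit (u0 + algebraMap A Aₘ k * y) := by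
    rcases unit_step u0 y hyu with h | h
    · exact ⟨1, by simpa using h⟩
    · exact ⟨2, by rw [map_ofNat]; exact h⟩
  obtain ⟨k, hk⟩ := hkex
  obtain ⟨⟨χ₁, s₁⟩, hs₁⟩ := IsLocalizedModule.surj S ΦP ε0
  refine ⟨k • n₀, χ₁, ?_⟩
  apply unit_notmem 𝔪
  have : algebraMap A Aₘ (χ₁ (m + a • (k • n₀)))
      = algebraMap A Aₘ (s₁ : A) * (u0 + algebraMap A Aₘ k * y) := by
    rw [← Phi_apply, ← hs₁, LinearMap.smul_apply, Submonoid.smul_def,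
      ← algebraMap_smul Aₘ (s₁ : A), smul_eq_mul]
    congr 1
    rw [show a • (k • n₀) = (k * a) • n₀ by rw [smul_smul, mul_comm]]
    exact hval k
  rw [this]
  exact (unit_S 𝔪 s₁).mul hk

/-- L1' (mirror): from `ψ w ∉ 𝔪` produce an exact kernel element of `ψ` detectable. -/
lemma locL1' (hr : 2 ≤ r) (g : Pₘ ≃ₗ[Aₘ] (Fin r → Aₘ)) (ψ : P →ₗ[A] A) (w : P)
    (hw : ψ w ∉ 𝔪) :
    ∃ (n : P) (ξ : P →ₗ[A] A), ψ n = 0 ∧ ξ n ∉ 𝔪 := by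
  haveI : Module.FinitePresentation A P := Module.finitePresentation_of_projective A P
  set eb : Fin r → Pₘ := fun i => g.symm (Pi.single i 1) with heb
  set ψb : Fin r → Aₘ := fun i => ΦP ψ (eb i) with hψb
  have hunit : IsUnit (∑ i, (g (mkP w) i) * ψb i) := by
    rw [← beta_decomp 𝔪 g (ΦP ψ) (mkP w), Phi_apply]
    exact notmem_unit 𝔪 hw
  obtain ⟨i₀, hi₀⟩ := exists_unit_term _ hunit
  have hψi₀ : IsUnit (ψb i₀) := isUnit_of_mul_isUnit_right hi₀
  have h0r : 0 < r := by omega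
  have h1r : 1 < r := by omega
  set j : Fin r := if (i₀ : ℕ) = 0 then ⟨1, h1r⟩ else ⟨0, h0r⟩ with hj
  have hji : j ≠ i₀ := by
    rcases Nat.eq_zero_or_pos (i₀ : ℕ) with h | h
    · simp only [hj, h, if_pos]
      intro hc
      have := congrArg (Fin.val) hc
      simp [h] at this
    · simp only [hj, if_neg (Nat.pos_iff_ne_zero.1 h)]
      intro hc
      have := congrArg (Fin.val) hc
      simp at this
      omega
  set εj : Pₘ →ₗ[Aₘ] Aₘ := (LinearMap.proj j).comp (g : Pₘ →ₗ[Aₘ] (Fin r → Aₘ)) with hεj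
  have hεjj : εj (eb j) = (1:Aₘ) := by
    rw [hεj, heb]
    simp [Pi.single_apply]
  have hεji : εj (eb i₀) = (0:Aₘ) := by
    rw [hεj, heb]
    simp only [LinearMap.coe_comp, Function.comp_apply, LinearEquiv.coe_coe,
      LinearEquiv.apply_symm_apply, LinearMap.proj_apply]
    rw [Pi.single_apply, if_neg hji]
  set nb : Pₘ := (ψb i₀) • eb j - (ψb j) • eb i₀ with hnb
  have hψnb : ΦP ψ nb = 0 := by
    rw [hnb, map_sub, map_smul, map_smul]
    rw [show ΦP ψ (eb j) = ψb j from rfl, show ΦP ψ (eb i₀) = ψb i₀ from rfl]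
    rw [smul_eq_mul, smul_eq_mul]
    ring
  obtain ⟨⟨n₁, s₀⟩, hs₀⟩ := IsLocalizedModule.surj S mkP nb
  obtain ⟨s₂, hs₂⟩ : ∃ s : S, (s : A) * (ψ n₁) = 0 := by
    apply kill_of_zero
    rw [← Phi_apply, ← hs₀, Submonoid.smul_def, ← algebraMap_smul Aₘ (s₀ : A) nb, map_smul,
      hψnb, smul_zero]
  obtain ⟨⟨ξ₁, s₁⟩, hs₁⟩ := IsLocalizedModule.surj S ΦP εj
  refine ⟨(s₂ : A) • n₁, ξ₁, by simp [hs₂], ?_⟩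
  apply unit_notmem 𝔪
  have e3 : εj ((LocalizedModule.mkLinearMap 𝔪.primeCompl P) n₁)
      = algebraMap A Aₘ (s₀:A) * ψb i₀ := by
    rw [← hs₀, Submonoid.smul_def, ← algebraMap_smul Aₘ (s₀ : A) nb, map_smul, smul_eq_mul]
    congr 1
    rw [hnb, map_sub, map_smul, map_smul, hεjj, hεji, smul_eq_mul, smul_eq_mul]
    ring
  have e2 : algebraMap A Aₘ (ξ₁ n₁)
      = algebraMap A Aₘ (s₁:A) * (algebraMap A Aₘ (s₀:A) * ψb i₀) := by
    rw [← Phi_apply, ← hs₁, LinearMap.smul_apply, Submonoid.smul_def,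
      ← algebraMap_smul Aₘ (s₁ : A), smul_eq_mul, e3]
  have e1 : algebraMap A Aₘ (ξ₁ ((s₂ : A) • n₁))
      = algebraMap A Aₘ (s₂:A) * algebraMap A Aₘ (ξ₁ n₁) := by
    rw [map_smul, smul_eq_mul, map_mul]
  rw [e1, e2]
  exact (unit_S 𝔪 s₂).mul ((unit_S 𝔪 s₁).mul ((unit_S 𝔪 s₀).mul hψi₀))

/-- L2' (mirror): from `b ∉ 𝔪` produce a Δ-shift making `ψ - b • χ` detectable. -/
lemma locL2' (hr : 2 ≤ r) (g : Pₘ ≃ₗ[Aₘ] (Fin r → Aₘ)) (ψ : P →ₗ[A] A) (b : A)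
    (hb : b ∉ 𝔪) :
    ∃ (χ : P →ₗ[A] A) (w : P), (ψ - b • χ) w ∉ 𝔪 := by
  haveI : Module.FinitePresentation A P := Module.finitePresentation_of_projective A P
  have h0r : 0 < r := by omega
  set i0 : Fin r := ⟨0, h0r⟩ with hi0
  set eb0 : Pₘ := g.symm (Pi.single i0 1) with heb0
  set ε0 : Pₘ →ₗ[Aₘ] Aₘ := (LinearMap.proj i0).comp (g : Pₘ →ₗ[Aₘ] (Fin r → Aₘ)) with hε0
  have hε0eb : ε0 eb0 = 1 := by
    rw [hε0, heb0]
    simp [Pi.single_apply]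
  obtain ⟨⟨χ₁, s₁⟩, hs₁⟩ := IsLocalizedModule.surj S ΦP ε0
  obtain ⟨⟨w₀, s₀⟩, hs₀⟩ := IsLocalizedModule.surj S mkP eb0
  set x : Aₘ := algebraMap A Aₘ (ψ w₀) with hx
  set y : Aₘ := algebraMap A Aₘ b * (algebraMap A Aₘ (s₁:A) * algebraMap A Aₘ (s₀:A)) with hy
  have hyu : IsUnit y := (notmem_unit 𝔪 hb).mul ((unit_S 𝔪 s₁).mul (unit_S 𝔪 s₀))
  have hχ₁w₀ : algebraMap A Aₘ (χ₁ w₀) = algebraMap A Aₘ (s₁:A) * algebraMap A Aₘ (s₀:A) := by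
    rw [← Phi_apply, ← hs₁, LinearMap.smul_apply, Submonoid.smul_def,
      ← algebraMap_smul Aₘ (s₁ : A), smul_eq_mul]
    congr 1
    rw [← hs₀, Submonoid.smul_def, ← algebraMap_smul Aₘ (s₀ : A) eb0, map_smul, hε0eb,
      smul_eq_mul, mul_one]
  have hval : ∀ k : A, algebraMap A Aₘ ((ψ - b • (k • χ₁)) w₀)
      = x + algebraMap A Aₘ k * (-y) := by
    intro k
    rw [LinearMap.sub_apply, map_sub, LinearMap.smul_apply, LinearMap.smul_apply]
    rw [smul_eq_mul, smul_eq_mul, map_mul, map_mul, hχ₁w₀, ← hx, hy]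
    ring
  have hkex : ∃ k : A, IsUnit (x + algebraMap A Aₘ k * (-y)) := by
    rcases unit_step x (-y) hyu.neg with h | h
    · exact ⟨1, by simpa using h⟩
    · exact ⟨2, by rw [map_ofNat]; exact h⟩
  obtain ⟨k, hk⟩ := hkex
  refine ⟨k • χ₁, w₀, ?_⟩
  apply unit_notmem 𝔪
  rw [hval k]
  exact hk

end LocPack

section DualSystem

variable {A : Type} [CommRing A] {P : Type} [AddCommGroup P] [Module A P]

/-- A finite dual system for a f.g. projective module. -/
lemma exists_dual_system [Module.Finite A P] [Module.Projective A P] :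
    ∃ (N : ℕ) (mi : Fin N → P) (ψi : Fin N → (P →ₗ[A] A)),
      ∀ q : P, ∑ i, (ψi i q) • mi i = q := by
  obtain ⟨N, s, hs⟩ := Module.Finite.exists_fin (R := A) (M := P)
  set π : (Fin N → A) →ₗ[A] P :=
    (Finsupp.linearCombination A s).comp
      ((Finsupp.linearEquivFunOnFinite A A (Fin N)).symm : (Fin N → A) →ₗ[A] (Fin N →₀ A))
    with hπ
  have hπsurj : Function.Surjective π := by
    have h1 : Function.Surjective (Finsupp.linearCombination A s) := by
      rw [← LinearMap.range_eq_top, Finsupp.range_linearCombination, hs]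
    exact h1.comp (Finsupp.linearEquivFunOnFinite A A (Fin N)).symm.surjective
  obtain ⟨σ, hσ⟩ := Module.projective_lifting_property π (LinearMap.id) hπsurj
  refine ⟨N, fun i => π ((Pi.basisFun A (Fin N)) i), fun i => (LinearMap.proj i).comp σ,
    fun q => ?_⟩
  have hdec := (Pi.basisFun A (Fin N)).sum_repr (σ q)
  simp only [Pi.basisFun_repr] at hdec
  have h2 : π (σ q) = q := by
    have := LinearMap.congr_fun hσ q
    simpa using this
  calc ∑ i, ((LinearMap.proj i).comp σ) q • π ((Pi.basisFun A (Fin N)) i)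
      = π (∑ i, (σ q i) • (Pi.basisFun A (Fin N)) i) := by
        rw [map_sum]
        congr 1; funext i
        rw [map_smul]
        rfl
    _ = π (σ q) := by rw [hdec]
    _ = q := h2

/-- Witness extraction for a unimodular functional, via the dual system. -/
lemma exists_witness [Module.Finite A P] [Module.Projective A P]
    (F : (A × P) →ₗ[A] A) (Φ : ((A × P) →ₗ[A] A) →ₗ[A] A) (hΦ : Φ F = 1) :
    ∃ (c : A) (w : P), c * F ((1:A), (0:P)) + F ((0:A), w) = 1 := by
  obtain ⟨N, mi, ψi, hsys⟩ := exists_dual_system (A := A) (P := P)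
  set fn1' : (A × P) →ₗ[A] A := LinearMap.fst A A P with hfn1
  set Finr : P →ₗ[A] A := F.comp (LinearMap.inr A A P) with hFinr
  set c : A := Φ fn1' with hc
  set w : P := ∑ i, (Φ ((ψi i).comp (LinearMap.snd A A P))) • mi i with hw
  have hFinr_sum : ∀ (co : Fin N → A), Finr (∑ i, co i • mi i) = ∑ i, co i * Finr (mi i) := by
    intro co
    rw [map_sum]
    congr 1; funext i
    rw [map_smul, smul_eq_mul]
  have hkey : F = F ((1:A), (0:P)) • fn1'
      + ∑ i, (Finr (mi i)) • ((ψi i).comp (LinearMap.snd A A P)) := by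
    apply LinearMap.ext
    rintro ⟨x, q⟩
    have h1 : ((x, q) : A × P) = x • ((1:A), (0:P)) + ((0:A), q) := by simp [Prod.ext_iff]
    conv_lhs => rw [h1]
    rw [map_add, map_smul]
    have h2 : F ((0:A), q) = ∑ i, (ψi i q) * Finr (mi i) := by
      have : F ((0:A), q) = Finr q := rfl
      rw [this, ← hsys q, hFinr_sum (fun i => ψi i q), hsys q]
    simp only [LinearMap.add_apply, LinearMap.smul_apply, smul_eq_mul, LinearMap.sum_apply,
      LinearMap.coe_comp, Function.comp_apply, LinearMap.fst_apply, LinearMap.snd_apply,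
      hfn1]
    rw [h2]
    congr 1
    · ring
    · exact Finset.sum_congr rfl (fun i _ => by ring)
  have hFw : F ((0:A), w) = ∑ i, (Φ ((ψi i).comp (LinearMap.snd A A P))) * Finr (mi i) := by
    have : F ((0:A), w) = Finr w := rfl
    rw [this, hw, hFinr_sum]
  have hval : Φ F = F ((1:A), (0:P)) * c + F ((0:A), w) := by
    conv_lhs => rw [hkey]
    rw [map_add, map_smul, map_sum, smul_eq_mul, hFw]
    congr 1
    exact Finset.sum_congr rfl (fun i _ => by rw [map_smul, smul_eq_mul]; ring)
  rw [hΦ] at hval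
  exact ⟨c, w, by linear_combination -hval⟩

end DualSystem


section MainProof

open ELtool

variable {A : Type} [CommRing A] {P : Type} [AddCommGroup P] [Module A P]

/-- The easy inclusion. -/
lemma EL_le_E : ELgroup A P ≤ Egroup A (A × P) := by
  rw [ELgroup, Egroup]
  apply Subgroup.closure_mono
  rintro σ (⟨aa, φ, hσ⟩ | ⟨mm, hσ⟩)
  · refine ⟨((1:A), (0:P)), fn2 (aa • φ), by simp, Or.inl ⟨fn1, by simp⟩, ?_⟩
    rintro ⟨x, q⟩
    rw [hσ x q]
    simp [Prod.ext_iff, mul_comm]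
  · refine ⟨((0:A), mm), fn1, by simp,
      Or.inr ⟨LinearMap.applyₗ (((1:A), (0:P)) : A × P), by simp⟩, ?_⟩
    rintro ⟨x, q⟩
    rw [hσ x q]
    simp [Prod.ext_iff]

/-- The hard inclusion. -/
lemma E_le_EL [Module.Finite A P] [Module.Projective A P]
    (r : ℕ) (hr : 2 ≤ r) (hrank : HasConstantRank A P r) :
    Egroup A (A × P) ≤ ELgroup A P := by
  rw [Egroup]
  rw [Subgroup.closure_le]
  rintro τ ⟨p, F, hFp, huni, happ⟩
  obtain ⟨a, m⟩ := p
  have hτeq : τ = trv (a, m) F hFp := by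
    apply LinearEquiv.ext
    intro v
    rw [happ v]
    rfl
  show τ ∈ ELgroup A P
  rw [hτeq]
  apply coefIdeal_top (a, m) F hFp
  by_contra hne
  obtain ⟨𝔪, hmax, hle⟩ := Ideal.exists_le_maximal _ hne
  haveI := hmax
  haveI hprime : 𝔪.IsPrime := hmax.isPrime
  obtain ⟨g⟩ := hrank 𝔪 hprime
  have hmul : ∀ (x y : A), x ∉ 𝔪 → y ∉ 𝔪 → x * y ∉ 𝔪 := fun x y hx hy hxy =>
    ((hprime.mem_or_mem hxy).elim hx hy)
  have hone : (1:A) ∉ 𝔪 := fun h1 =>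
    hmax.ne_top (Ideal.eq_top_of_isUnit_mem _ h1 isUnit_one)
  suffices hs : ∃ s : A, s ∈ coefIdeal (a, m) F hFp ∧ s ∉ 𝔪 by
    obtain ⟨s, hsI, hs𝔪⟩ := hs
    exact hs𝔪 (hle hsI)
  cases huni with
  | inl hup =>
    obtain ⟨u, hu⟩ := hup
    have hrel : a * u ((1:A),(0:P)) + u ((0:A), m) = 1 := by
      rw [← F_decomp]; exact hu
    by_cases hm : u ((0:A), m) ∈ 𝔪
    · -- here a ∉ 𝔪 : conjugate by a suitable Γ_n
      have ha : a ∉ 𝔪 := by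
        intro haa
        exact hone (hrel ▸ add_mem (Ideal.mul_mem_right _ _ haa) hm)
      obtain ⟨n, χ, hχ⟩ := locL2 𝔪 hr g m a ha
      obtain ⟨χt, v, hχtm, hχtv⟩ := locL1 𝔪 hr g (m + a • n) χ hχ
      set F' : (A × P) →ₗ[A] A := F - F ((0:A), n) • fn1 with hF'
      have hpt : ((a, m) : A × P) + (a, m).1 • (((0:A), n) : A × P) = ((a, m + a • n) : A × P)
          := by simp [Prod.ext_iff]
      have hF'p' : F' ((a, m + a • n) : A × P) = 0 := by
        rw [← hpt]
        exact shiftG_vanish n (a, m) F hFp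
      refine ⟨(χ (m + a • n) * χ (m + a • n)) * χt v, ?_,
        hmul _ _ (hmul _ _ hχ hχ) hχtv⟩
      intro lam
      rw [conjGamma n (a, m) F hFp (lam * ((χ (m + a • n) * χ (m + a • n)) * χt v))]
      have hU1 := U1 a (m + a • n) F' hF'p' χ χt v hχtm lam
      have heq : trv (((a, m) : A × P) + (a, m).1 • (((0:A), n) : A × P))
            ((lam * ((χ (m + a • n) * χ (m + a • n)) * χt v)) • F')
            (smul_vanish _ _ _ (shiftG_vanish n (a, m) F hFp))
          = trv ((a, m + a • n) : A × P)
            ((lam * (χ (m + a • n) * χ (m + a • n)) * χt v) • F')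
            (smul_vanish _ _ _ hF'p') := by
        apply trv_ext
        intro w
        rw [hpt, show lam * ((χ (m + a • n) * χ (m + a • n)) * χt v)
          = lam * (χ (m + a • n) * χ (m + a • n)) * χt v by ring]
      rw [heq]
      exact hU1
    · -- direct U1 with χ' := u ∘ inr
      set χu : P →ₗ[A] A := u.comp (LinearMap.inr A A P) with hχu
      have hm' : χu m ∉ 𝔪 := hm
      obtain ⟨χt, v, hχtm, hχtv⟩ := locL1 𝔪 hr g m χu hm'
      refine ⟨(χu m * χu m) * χt v, ?_, hmul _ _ (hmul _ _ hm' hm') hχtv⟩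
      intro lam
      have hU1 := U1 a m F hFp χu χt v hχtm lam
      have heq : trv ((a, m) : A × P) ((lam * ((χu m * χu m) * χt v)) • F)
            (smul_vanish _ _ _ hFp)
          = trv ((a, m) : A × P) ((lam * (χu m * χu m) * χt v) • F)
            (smul_vanish _ _ _ hFp) :=
        trv_coef _ _ hFp (by ring) _ _
      exact heq ▸ hU1
  | inr hup =>
    obtain ⟨Φw, hΦw⟩ := hup
    obtain ⟨c, w, hcw⟩ := exists_witness F Φw hΦw
    set ψF : P →ₗ[A] A := F.comp (LinearMap.inr A A P) with hψF
    by_cases hw : F ((0:A), w) ∈ 𝔪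
    · -- here b := F(1,0) ∉ 𝔪 : conjugate by a suitable Δ_χ
      have hb : F ((1:A), (0:P)) ∉ 𝔪 := by
        intro hbb
        exact hone (hcw ▸ add_mem (Ideal.mul_mem_left _ _ hbb) hw)
      obtain ⟨χ, w₀, hχw₀⟩ := locL2' 𝔪 hr g ψF (F ((1:A), (0:P))) hb
      set F'' : (A × P) →ₗ[A] A := F - F ((1:A), (0:P)) • fn2 χ with hF''
      have hpt : ((a, m) : A × P) + (χ (a, m).2) • (((1:A), (0:P)) : A × P)
          = ((a + χ m, m) : A × P) := by simp [Prod.ext_iff]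
      have hF''p'' : F'' ((a + χ m, m) : A × P) = 0 := by
        rw [← hpt]
        exact shiftD_vanish' χ (a, m) F hFp
      have hF''eval : ∀ z : P, F'' ((0:A), z) = (ψF - F ((1:A), (0:P)) • χ) z := by
        intro z
        rw [hF'']
        simp only [LinearMap.sub_apply, LinearMap.smul_apply, smul_eq_mul, fn2_apply]
        rfl
      have hF''w₀ : F'' ((0:A), w₀) ∉ 𝔪 := by rw [hF''eval]; exact hχw₀
      obtain ⟨n, ξ, hn, hξn⟩ := locL1' 𝔪 hr g (ψF - F ((1:A), (0:P)) • χ) w₀ hχw₀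
      have hF''n : F'' ((0:A), n) = 0 := by rw [hF''eval]; exact hn
      refine ⟨(F'' ((0:A), w₀) * F'' ((0:A), w₀)) * ξ n, ?_,
        hmul _ _ (hmul _ _ hF''w₀ hF''w₀) hξn⟩
      intro lam
      rw [conjDelta χ (a, m) F hFp (lam * ((F'' ((0:A), w₀) * F'' ((0:A), w₀)) * ξ n))]
      have hU2 := U2 (a + χ m) m F'' hF''p'' w₀ ξ n hF''n lam
      have heq : trv (((a, m) : A × P) + (χ (a, m).2) • (((1:A), (0:P)) : A × P))
            ((lam * ((F'' ((0:A), w₀) * F'' ((0:A), w₀)) * ξ n)) • F'')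
            (smul_vanish _ _ _ (shiftD_vanish' χ (a, m) F hFp))
          = trv ((a + χ m, m) : A × P)
            ((lam * (F'' ((0:A), w₀) * F'' ((0:A), w₀)) * ξ n) • F'')
            (smul_vanish _ _ _ hF''p'') := by
        apply trv_ext
        intro v
        rw [hpt, show lam * ((F'' ((0:A), w₀) * F'' ((0:A), w₀)) * ξ n)
          = lam * (F'' ((0:A), w₀) * F'' ((0:A), w₀)) * ξ n by ring]
      rw [heq]
      exact hU2
    · -- direct U2
      have hw' : F ((0:A), w) ∉ 𝔪 := hw
      obtain ⟨n, ξ, hn, hξn⟩ := locL1' 𝔪 hr g ψF w hw'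
      have hn' : F ((0:A), n) = 0 := hn
      refine ⟨(F ((0:A), w) * F ((0:A), w)) * ξ n, ?_,
        hmul _ _ (hmul _ _ hw' hw') hξn⟩
      intro lam
      have hU2 := U2 a m F hFp w ξ n hn' lam
      have heq : trv ((a, m) : A × P) ((lam * ((F ((0:A), w) * F ((0:A), w)) * ξ n)) • F)
            (smul_vanish _ _ _ hFp)
          = trv ((a, m) : A × P) ((lam * (F ((0:A), w) * F ((0:A), w)) * ξ n) • F)
            (smul_vanish _ _ _ hFp) :=
        trv_coef _ _ hFp (by ring) _ _
      exact heq ▸ hU2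

end MainProof


/-- **Theorem (Bak–Basu–Rao).** For a projective module `P` of rank `≥ 2`,
`EL(A ⊕ P) = E(A ⊕ P)`. -/
theorem EL_eq_E (A : Type) [CommRing A]
    (P : Type) [AddCommGroup P] [Module A P] [Module.Finite A P] [Module.Projective A P]
    (r : ℕ) (hr : 2 ≤ r) (hrank : HasConstantRank A P r) :
    ELgroup A P = Egroup A (A × P) := by
  refine le_antisymm EL_le_E (E_le_EL r hr hrank)
end

section
/- Let R be a commutative ring, I an ideal of R, and n ≥ 3. Then E_n(R, I²) ⊆ E_n(I), where E_n(I) is the subgroup of E_n(R) generated by the elementary matrices E_ij(a) = Id + a·e_ij with a ∈ I, i ≠ j, and E_n(R, I²) is the normal closure of E_n(I²) in E_n(R). -/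
namespace EnSq

open Matrix

variable {R : Type} [CommRing R] {n : ℕ}

lemma vmv_mul (u v u' v' : Fin n → R) :
    vecMulVec u v * vecMulVec u' v' = (v ⬝ᵥ u') • vecMulVec u v' := by
  ext i j
  simp only [mul_apply, vecMulVec_apply, Matrix.smul_apply, dotProduct, Finset.sum_mul, smul_eq_mul]
  apply Finset.sum_congr rfl
  intro k _
  ring

lemma vmv_smul_left (c : R) (u v : Fin n → R) :
    vecMulVec (c • u) v = c • vecMulVec u v := by
  ext i j; simp [vecMulVec_apply, mul_assoc]

lemma vmv_smul_right (c : R) (u v : Fin n → R) :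
    vecMulVec u (c • v) = c • vecMulVec u v := by
  ext i j; simp [vecMulVec_apply]; ring

lemma vmv_add_right (u v v' : Fin n → R) :
    vecMulVec u (v + v') = vecMulVec u v + vecMulVec u v' := by
  ext i j; simp [vecMulVec_apply]; ring

lemma vmv_add_left (u u' v : Fin n → R) :
    vecMulVec (u + u') v = vecMulVec u v + vecMulVec u' v := by
  ext i j; simp [vecMulVec_apply]; ring

lemma vmv_zero_right (u : Fin n → R) : vecMulVec u (0 : Fin n → R) = 0 := by
  ext i j; simp [vecMulVec_apply]

/-- The transvection `1 + u vᵀ` as an element of `GL n R`, given `v ⬝ᵥ u = 0`. -/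
def tv (u v : Fin n → R) (h : v ⬝ᵥ u = 0) : GL (Fin n) R where
  val := 1 + vecMulVec u v
  inv := 1 - vecMulVec u v
  val_inv := by
    have h0 := vmv_mul u v u v
    rw [h, zero_smul] at h0
    rw [mul_sub, mul_one, add_mul, one_mul, h0, add_zero]
    abel
  inv_val := by
    have h0 := vmv_mul u v u v
    rw [h, zero_smul] at h0
    rw [sub_mul, one_mul, mul_add, mul_one, h0, add_zero]
    abel

@[simp] lemma tv_val (u v : Fin n → R) (h : v ⬝ᵥ u = 0) :
    (tv u v h : Matrix (Fin n) (Fin n) R) = 1 + vecMulVec u v := rfl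

@[simp] lemma tv_inv_val (u v : Fin n → R) (h : v ⬝ᵥ u = 0) :
    ((tv u v h)⁻¹ : GL (Fin n) R).val = 1 - vecMulVec u v := rfl

lemma tv_mul_right (u v v' : Fin n → R) (h : v ⬝ᵥ u = 0) (h' : v' ⬝ᵥ u = 0) (h'' : (v + v') ⬝ᵥ u = 0) :
    tv u v h * tv u v' h' = tv u (v + v') h'' := by
  apply Units.ext
  show (1 + vecMulVec u v) * (1 + vecMulVec u v') = 1 + vecMulVec u (v + v')
  rw [vmv_add_right, mul_add, mul_one, add_mul, one_mul, vmv_mul, h, zero_smul]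
  abel

lemma tv_mul_left (u u' v : Fin n → R) (h : v ⬝ᵥ u = 0) (h' : v ⬝ᵥ u' = 0) (h'' : v ⬝ᵥ (u + u') = 0) :
    tv u v h * tv u' v h' = tv (u + u') v h'' := by
  apply Units.ext
  show (1 + vecMulVec u v) * (1 + vecMulVec u' v) = 1 + vecMulVec (u + u') v
  rw [vmv_add_left, mul_add, mul_one, add_mul, one_mul, vmv_mul, h', zero_smul]
  abel

lemma tv_zero (u : Fin n → R) (h : (0 : Fin n → R) ⬝ᵥ u = 0) : tv u 0 h = 1 := by
  apply Units.ext
  show 1 + vecMulVec u 0 = 1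
  rw [vmv_zero_right, add_zero]

lemma tv_congr {u u' v v' : Fin n → R} (hu : u = u') (hv : v = v')
    {h : v ⬝ᵥ u = 0} {h' : v' ⬝ᵥ u' = 0} : tv u v h = tv u' v' h' := by
  subst hu; subst hv; rfl

lemma vmv_single_single (i j : Fin n) (a b : R) :
    vecMulVec (Pi.single i a) (Pi.single j b) = Matrix.single i j (a * b) := by
  ext s t
  simp only [vecMulVec_apply, Pi.single_apply, Matrix.single, of_apply]
  split_ifs <;> simp_all

section Ideal

variable (I : Ideal R)

lemma elem_mem {i j : Fin n} (hij : i ≠ j) {a : R} (ha : a ∈ I) (g : GL (Fin n) R)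
    (hg : (g : Matrix (Fin n) (Fin n) R) = elemMatrix i j a) : g ∈ EnIdeal R n I :=
  Subgroup.subset_closure ⟨i, j, a, hij, ha, hg⟩

/-- row-type transvection `1 + e_m (s v)ᵀ` is in `E_n(I)` when `v m = 0`, entries in `I`. -/
lemma tv_single_left_mem (m : Fin n) (s : R) (v : Fin n → R) (hvm : v m = 0)
    (hI : ∀ t, s * v t ∈ I) (h : v ⬝ᵥ Pi.single m s = 0) :
    tv (Pi.single m s) v h ∈ EnIdeal R n I := by
  classical
  have key : ∀ (F : Finset (Fin n)) (v : Fin n → R), (∀ t, v t ≠ 0 → t ∈ F) → v m = 0 →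
      (∀ t, s * v t ∈ I) → ∀ (h : v ⬝ᵥ Pi.single m s = 0),
      tv (Pi.single m s) v h ∈ EnIdeal R n I := by
    intro F
    induction F using Finset.induction_on with
    | empty =>
      intro v hsupp hvm hI h
      have : v = 0 := by
        funext t
        by_contra ht
        exact absurd (hsupp t ht) (Finset.notMem_empty t)
      subst this
      rw [tv_zero]
      exact one_mem _
    | @insert a F ha IH =>
      intro v hsupp hvm hI h
      by_cases hva : v a = 0
      · exact IH v (fun t ht => by
          rcases Finset.mem_insert.mp (hsupp t ht) with rfl | hF
          · exact absurd hva ht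
          · exact hF) hvm hI h
      have ham : a ≠ m := fun e => hva (e ▸ hvm)
      set v' : Fin n → R := Function.update v a 0 with hv'
      have hsum : v = Pi.single a (v a) + v' := by
        funext t
        by_cases hta : t = a
        · subst hta; simp [v', Function.update_self]
        · simp [v', Pi.single_apply, hta, Function.update_of_ne hta]
      have h1 : (Pi.single a (v a) : Fin n → R) ⬝ᵥ Pi.single m s = 0 := by
        simp only [dotProduct, Pi.single_apply]
        rw [Finset.sum_eq_zero]
        intro t _
        by_cases hta : t = a
        · rw [if_neg (fun htm => ham (hta.symm.trans htm)), mul_zero]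
        · rw [if_neg hta, zero_mul]
      have h2 : v' ⬝ᵥ Pi.single m s = 0 := by
        simp [dotProduct, Pi.single_apply]
        simp [v', Function.update_of_ne (Ne.symm ham), hvm]
      rw [tv_congr rfl hsum (h' := by rw [← hsum]; exact h),
        ← tv_mul_right (Pi.single m s) (Pi.single a (v a)) v' h1 h2]
      apply mul_mem
      · apply elem_mem I (Ne.symm ham) (hI a)
        rw [tv_val, vmv_single_single]
        rfl
      · apply IH v' (fun t ht => by
          have : t ≠ a := fun e => ht (by simp [v', e, Function.update_self])
          have hvt : v t ≠ 0 := fun e => ht (by simp [v', Function.update_of_ne this, e])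
          rcases Finset.mem_insert.mp (hsupp t hvt) with rfl | hF
          · exact absurd rfl this
          · exact hF)
        · simp [v', Function.update_of_ne (Ne.symm ham), hvm]
        · intro t
          by_cases hta : t = a
          · subst hta; simp [v', Function.update_self]
          · simp [v', Function.update_of_ne hta]; exact hI t
  exact key Finset.univ v (fun t _ => Finset.mem_univ t) hvm hI h

/-- col-type transvection `1 + u (s e_m)ᵀ` is in `E_n(I)` when `u m = 0`, entries in `I`. -/
lemma tv_single_right_mem (m : Fin n) (s : R) (u : Fin n → R) (hum : u m = 0)
    (hI : ∀ t, u t * s ∈ I) (h : (Pi.single m s : Fin n → R) ⬝ᵥ u = 0) :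
    tv u (Pi.single m s) h ∈ EnIdeal R n I := by
  classical
  have key : ∀ (F : Finset (Fin n)) (u : Fin n → R), (∀ t, u t ≠ 0 → t ∈ F) → u m = 0 →
      (∀ t, u t * s ∈ I) → ∀ (h : (Pi.single m s : Fin n → R) ⬝ᵥ u = 0),
      tv u (Pi.single m s) h ∈ EnIdeal R n I := by
    intro F
    induction F using Finset.induction_on with
    | empty =>
      intro u hsupp hum hI h
      have : u = 0 := by
        funext t; by_contra ht
        exact absurd (hsupp t ht) (Finset.notMem_empty t)
      subst this
      have : tv (0 : Fin n → R) (Pi.single m s) h = 1 := by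
        apply Units.ext
        show 1 + vecMulVec 0 (Pi.single m s) = 1
        have : vecMulVec (0 : Fin n → R) (Pi.single m s) = 0 := by
          ext i j; simp [vecMulVec_apply]
        rw [this, add_zero]
      rw [this]; exact one_mem _
    | @insert a F ha IH =>
      intro u hsupp hum hI h
      by_cases hua : u a = 0
      · exact IH u (fun t ht => by
          rcases Finset.mem_insert.mp (hsupp t ht) with rfl | hF
          · exact absurd hua ht
          · exact hF) hum hI h
      have ham : a ≠ m := fun e => hua (e ▸ hum)
      set u' : Fin n → R := Function.update u a 0 with hu'
      have hsum : u = Pi.single a (u a) + u' := by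
        funext t
        by_cases hta : t = a
        · subst hta; simp [u', Function.update_self]
        · simp [u', Pi.single_apply, hta, Function.update_of_ne hta]
      have h1 : (Pi.single m s : Fin n → R) ⬝ᵥ Pi.single a (u a) = 0 := by
        simp only [dotProduct, Pi.single_apply]
        rw [Finset.sum_eq_zero]
        intro t _
        by_cases hta : t = a
        · rw [if_neg (fun htm => ham (hta.symm.trans htm)), zero_mul]
        · rw [if_neg hta, mul_zero]
      have h2 : (Pi.single m s : Fin n → R) ⬝ᵥ u' = 0 := by
        simp [dotProduct, Pi.single_apply]
        simp [u', Function.update_of_ne (Ne.symm ham), hum]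
      rw [tv_congr hsum rfl (h' := by rw [← hsum]; exact h),
        ← tv_mul_left (Pi.single a (u a)) u' (Pi.single m s) h1 h2]
      apply mul_mem
      · apply elem_mem I ham (hI a)
        rw [tv_val, vmv_single_single]
        rfl
      · apply IH u' (fun t ht => by
          have hta : t ≠ a := fun e => ht (by simp [u', e, Function.update_self])
          have hut : u t ≠ 0 := fun e => ht (by simp [u', Function.update_of_ne hta, e])
          rcases Finset.mem_insert.mp (hsupp t hut) with rfl | hF
          · exact absurd rfl hta
          · exact hF)
        · simp [u', Function.update_of_ne (Ne.symm ham), hum]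
        · intro t
          by_cases hta : t = a
          · subst hta; simp [u', Function.update_self]
          · simp [u', Function.update_of_ne hta]; exact hI t
  exact key Finset.univ u (fun t _ => Finset.mem_univ t) hum hI h


lemma dot_disj (v u : Fin n → R) (hd : ∀ t, u t = 0 ∨ v t = 0) : v ⬝ᵥ u = 0 := by
  rw [dotProduct, Finset.sum_eq_zero]
  intro t _
  rcases hd t with h | h
  · rw [h, mul_zero]
  · rw [h, zero_mul]

lemma dot_sum {α : Type} (F : Finset α) (V : α → Fin n → R) (u : Fin n → R)
    (h0 : ∀ a, V a ⬝ᵥ u = 0) : (∑ a ∈ F, V a) ⬝ᵥ u = 0 := by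
  classical
  induction F using Finset.induction_on with
  | empty => simp
  | @insert a F ha IH => rw [Finset.sum_insert ha, add_dotProduct, h0, IH, add_zero]

/-- Transvections with disjointly supported column/row, `I`-entries, are in `E_n(I)`. -/
lemma tv_disj_mem (u v : Fin n → R) (hdisj : ∀ t, u t = 0 ∨ v t = 0)
    (hI : ∀ s t, u s * v t ∈ I) (h : v ⬝ᵥ u = 0) : tv u v h ∈ EnIdeal R n I := by
  classical
  have key : ∀ (F : Finset (Fin n)) (u : Fin n → R), (∀ t, u t ≠ 0 → t ∈ F) →
      (∀ t, u t = 0 ∨ v t = 0) → (∀ s t, u s * v t ∈ I) → ∀ (h : v ⬝ᵥ u = 0),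
      tv u v h ∈ EnIdeal R n I := by
    intro F
    induction F using Finset.induction_on with
    | empty =>
      intro u hsupp _ _ h
      have : u = 0 := by
        funext t; by_contra ht
        exact absurd (hsupp t ht) (Finset.notMem_empty t)
      subst this
      have : tv (0 : Fin n → R) v h = 1 := by
        apply Units.ext
        show 1 + vecMulVec 0 v = 1
        have : vecMulVec (0 : Fin n → R) v = 0 := by
          ext i j; simp [vecMulVec_apply]
        rw [this, add_zero]
      rw [this]; exact one_mem _
    | @insert a F ha IH =>
      intro u hsupp hdisj hI h
      by_cases hua : u a = 0
      · exact IH u (fun t ht => by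
          rcases Finset.mem_insert.mp (hsupp t ht) with rfl | hF
          · exact absurd hua ht
          · exact hF) hdisj hI h
      have hva : v a = 0 := (hdisj a).resolve_left hua
      set u' : Fin n → R := Function.update u a 0 with hu'
      have hsum : u = Pi.single a (u a) + u' := by
        funext t
        by_cases hta : t = a
        · subst hta; simp [u', Function.update_self]
        · simp [u', Pi.single_apply, hta, Function.update_of_ne hta]
      have hdisj' : ∀ t, u' t = 0 ∨ v t = 0 := by
        intro t
        by_cases hta : t = a
        · subst hta; left; simp [u', Function.update_self]
        · rw [show u' t = u t by simp [u', Function.update_of_ne hta]]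
          exact hdisj t
      have h1 : v ⬝ᵥ Pi.single a (u a) = 0 := by
        rw [dotProduct_single, hva, zero_mul]
      have h2 : v ⬝ᵥ u' = 0 := dot_disj v u' (fun t => (hdisj' t).imp id id)
      rw [tv_congr hsum rfl (h' := by rw [← hsum]; exact h),
        ← tv_mul_left (Pi.single a (u a)) u' v h1 h2]
      apply mul_mem
      · apply tv_single_left_mem I a (u a) v hva (fun t => hI a t)
      · apply IH u' (fun t ht => by
          have hta : t ≠ a := fun e => ht (by simp [u', e, Function.update_self])
          have hut : u t ≠ 0 := fun e => ht (by simp [u', Function.update_of_ne hta, e])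
          rcases Finset.mem_insert.mp (hsupp t hut) with rfl | hF
          · exact absurd rfl hta
          · exact hF) hdisj'
        intro s t
        by_cases hsa : s = a
        · subst hsa; simp [u', Function.update_self]
        · rw [show u' s = u s by simp [u', Function.update_of_ne hsa]]
          exact hI s t
  exact key Finset.univ u (fun t _ => Finset.mem_univ t) hdisj hI h

/-- Commutator case: both vectors `I`-valued with a common zero coordinate. -/
lemma tv_comm_mem (m : Fin n) (U V : Fin n → R) (hUm : U m = 0) (hVm : V m = 0)
    (hUI : ∀ t, U t ∈ I) (hVI : ∀ t, V t ∈ I) (h : V ⬝ᵥ U = 0) :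
    tv U V h ∈ EnIdeal R n I := by
  classical
  set em : Fin n → R := Pi.single m 1 with hem
  have h1 : em ⬝ᵥ U = 0 := by rw [hem, single_dotProduct, hUm, mul_zero]
  have h2 : V ⬝ᵥ em = 0 := by rw [hem, dotProduct_single, hVm, zero_mul]
  have hee : em ⬝ᵥ em = 1 := by rw [hem, single_dotProduct]; simp
  set A := vecMulVec U em with hA
  set B := vecMulVec em V with hB
  set M := vecMulVec U V with hM
  have hAA : A * A = 0 := by rw [hA, vmv_mul, h1, zero_smul]
  have hBB : B * B = 0 := by rw [hB, vmv_mul, h2, zero_smul]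
  have hBA : B * A = 0 := by rw [hB, hA, vmv_mul, h, zero_smul]
  have hAB : A * B = M := by rw [hA, hB, hM, vmv_mul, hee, one_smul]
  have hMA : M * A = 0 := by rw [hM, hA, vmv_mul, h, zero_smul]
  have hMB : M * B = 0 := by rw [hM, hB, vmv_mul, h2, zero_smul]
  have hMM : M * M = 0 := by rw [hM, vmv_mul, h, zero_smul]
  have hAM : A * M = 0 := by rw [hA, hM, vmv_mul, h1, zero_smul]
  have hBM : B * M = 0 := by rw [hB, hM, vmv_mul, h, zero_smul]
  have key : tv U V h = tv U em h1 * tv em V h2 * (tv U em h1)⁻¹ * (tv em V h2)⁻¹ := by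
    apply Units.ext
    rw [Units.val_mul, Units.val_mul, Units.val_mul]
    show (1 : Matrix (Fin n) (Fin n) R) + M = ((1 + A) * (1 + B)) * (1 - A) * (1 - B)
    have e1 : ((1 : Matrix (Fin n) (Fin n) R) + A) * (1 + B) = 1 + A + B + M := by
      rw [mul_add, mul_one, add_mul, one_mul, hAB]; abel
    have e2 : ((1 : Matrix (Fin n) (Fin n) R) + A + B + M) * (1 - A) =
        1 + B + M - M * A := by
      rw [mul_sub, mul_one, add_mul, add_mul, add_mul, one_mul, hAA, hBA]
      abel
    have e3 : ((1 : Matrix (Fin n) (Fin n) R) + B + M - M * A) * (1 - B) = 1 + M := by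
      rw [hMA, sub_zero, mul_sub, mul_one, add_mul, add_mul, one_mul, hBB, hMB]
      abel
    rw [e1, e2, e3]
  rw [key]
  have m1 : tv U em h1 ∈ EnIdeal R n I := by
    apply tv_single_right_mem I m 1 U hUm
    intro t; rw [mul_one]; exact hUI t
  have m2 : tv em V h2 ∈ EnIdeal R n I := by
    apply tv_single_left_mem I m 1 V hVm
    intro t; rw [one_mul]; exact hVI t
  exact mul_mem (mul_mem (mul_mem m1 m2) (inv_mem m1)) (inv_mem m2)

/-- Product of transvections over a finite family of rows. -/
lemma tv_sum_mem {α : Type} (F : Finset α) (u : Fin n → R) (V : α → Fin n → R)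
    (h0 : ∀ a, V a ⬝ᵥ u = 0)
    (hmem : ∀ a, ∀ (ha : V a ⬝ᵥ u = 0), tv u (V a) ha ∈ EnIdeal R n I)
    (h : (∑ a ∈ F, V a) ⬝ᵥ u = 0) :
    tv u (∑ a ∈ F, V a) h ∈ EnIdeal R n I := by
  classical
  induction F using Finset.induction_on with
  | empty =>
    rw [tv_congr rfl Finset.sum_empty (h' := by rw [zero_dotProduct]), tv_zero]
    exact one_mem _
  | @insert a F ha IH =>
    rw [tv_congr rfl (Finset.sum_insert ha)
        (h' := by rw [add_dotProduct, h0, dot_sum F V u h0, add_zero]),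
      ← tv_mul_right u (V a) (∑ b ∈ F, V b) (h0 a) (dot_sum F V u h0)]
    exact mul_mem (hmem a (h0 a)) (IH _)

/-- Koszul relation vector `p l • e_k - p k • e_l`. -/
def kos (p : Fin n → R) (k l : Fin n) : Fin n → R :=
  p l • (Pi.single k 1 : Fin n → R) - p k • (Pi.single l 1 : Fin n → R)

lemma kos_apply (p : Fin n → R) (k l t : Fin n) :
    kos p k l t = p l * (Pi.single k 1 : Fin n → R) t
      - p k * (Pi.single l 1 : Fin n → R) t := rfl

lemma exists_third (hn : 3 ≤ n) (k l : Fin n) : ∃ m : Fin n, m ≠ k ∧ m ≠ l := by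
  by_contra hc
  push_neg at hc
  have hsub : (Finset.univ : Finset (Fin n)) ⊆ {k, l} := by
    intro m _
    rcases eq_or_ne m k with rfl | h
    · simp
    · simp [hc m h]
  have hcard := Finset.card_le_card hsub
  rw [Finset.card_univ, Fintype.card_fin] at hcard
  have : ({k, l} : Finset (Fin n)).card ≤ 2 := by
    apply le_trans (Finset.card_insert_le _ _)
    simp
  omega

lemma lemB (hn : 3 ≤ n) (p : Fin n → R) (k l : Fin n) (hkl : k ≠ l) (x d : R)
    (hx : x ∈ I) (hd : d ∈ I)
    (h : (d • kos p k l) ⬝ᵥ (x • p) = 0) :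
    tv (x • p) (d • kos p k l) h ∈ EnIdeal R n I := by
  classical
  set w : Fin n → R := d • kos p k l with hw
  have hwk : w k = d * p l := by
    simp [hw, kos_apply, Pi.single_apply, hkl, Ne.symm hkl]
  have hwl : w l = -(d * p k) := by
    simp [hw, kos_apply, Pi.single_apply, hkl, Ne.symm hkl]
  have hwt : ∀ t, t ≠ k → t ≠ l → w t = 0 := by
    intro t htk htl
    simp [hw, kos_apply, Pi.single_apply, htk, htl]
  have hwI : ∀ t, w t ∈ I := by
    intro t
    by_cases htk : t = k
    · subst htk; rw [hwk]; exact Ideal.mul_mem_right _ _ hd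
    by_cases htl : t = l
    · subst htl; rw [hwl]; exact neg_mem (Ideal.mul_mem_right _ _ hd)
    · rw [hwt t htk htl]; exact zero_mem _
  set u1 : Fin n → R := x • Function.update (Function.update p k 0) l 0 with hu1
  set u2 : Fin n → R := x • (Pi.single k (p k) + Pi.single l (p l)) with hu2
  have hu1t : ∀ t, t ≠ k → t ≠ l → u1 t = x * p t := by
    intro t htk htl
    simp [hu1, Function.update_of_ne htl, Function.update_of_ne htk]
  have hu1k : u1 k = 0 := by simp [hu1, Function.update_of_ne hkl, Function.update_self]
  have hu1l : u1 l = 0 := by simp [hu1, Function.update_self]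
  have hu2t : ∀ t, t ≠ k → t ≠ l → u2 t = 0 := by
    intro t htk htl
    simp [hu2, Pi.single_apply, htk, htl]
  have hu2k : u2 k = x * p k := by simp [hu2, Pi.single_apply, hkl, Ne.symm hkl]
  have hu2l : u2 l = x * p l := by simp [hu2, Pi.single_apply, hkl, Ne.symm hkl]
  have hsplit : x • p = u1 + u2 := by
    funext t
    by_cases htk : t = k
    · subst htk; simp only [Pi.add_apply, hu1k, hu2k, zero_add, Pi.smul_apply, smul_eq_mul]
    by_cases htl : t = l
    · subst htl; simp only [Pi.add_apply, hu1l, hu2l, zero_add, Pi.smul_apply, smul_eq_mul]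
    · simp only [Pi.add_apply, hu1t t htk htl, hu2t t htk htl, add_zero, Pi.smul_apply,
        smul_eq_mul]
  have hdisj1 : ∀ t, u1 t = 0 ∨ w t = 0 := by
    intro t
    by_cases htk : t = k
    · subst htk; left; exact hu1k
    by_cases htl : t = l
    · subst htl; left; exact hu1l
    · right; exact hwt t htk htl
  have hwu1 : w ⬝ᵥ u1 = 0 := dot_disj w u1 hdisj1
  have hwu2 : w ⬝ᵥ u2 = 0 := by
    have h' := h
    rw [hsplit, dotProduct_add, hwu1, zero_add] at h'
    exact h'
  have hu1I : ∀ s, u1 s ∈ I := by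
    intro s
    rw [hu1, Pi.smul_apply, smul_eq_mul]
    exact Ideal.mul_mem_right _ _ hx
  have hu2I : ∀ s, u2 s ∈ I := by
    intro s
    rw [hu2, Pi.smul_apply, smul_eq_mul]
    exact Ideal.mul_mem_right _ _ hx
  rw [tv_congr hsplit rfl (h' := by rw [← hsplit]; exact h),
    ← tv_mul_left u1 u2 w hwu1 hwu2]
  apply mul_mem
  · exact tv_disj_mem I u1 w hdisj1
      (fun s t => Ideal.mul_mem_right _ _ (hu1I s)) hwu1
  · obtain ⟨m, hmk, hml⟩ := exists_third hn k l
    exact tv_comm_mem I m u2 w (hu2t m hmk hml) (hwt m hmk hml) hu2I hwI hwu2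

lemma kos_dot (p : Fin n → R) (k l : Fin n) : kos p k l ⬝ᵥ p = 0 := by
  rw [kos, sub_dotProduct, smul_dotProduct, smul_dotProduct, single_dotProduct,
    single_dotProduct, smul_eq_mul, smul_eq_mul]
  ring

lemma lemA (hn : 3 ≤ n) (p q r : Fin n → R) (hqp : q ⬝ᵥ p = 0) (hrp : r ⬝ᵥ p = 1)
    (x y : R) (hx : x ∈ I) (hy : y ∈ I) (h : (y • q) ⬝ᵥ (x • p) = 0) :
    tv (x • p) (y • q) h ∈ EnIdeal R n I := by
  classical
  have hq : y • q = ∑ kl : Fin n × Fin n,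
      (y * r kl.2 * q kl.1) • kos p kl.1 kl.2 := by
    funext t
    rw [Finset.sum_apply, Fintype.sum_prod_type]
    have hterm : ∀ k l : Fin n,
        ((y * r l * q k) • kos p k l) t =
          (if t = k then y * r l * q k * p l else 0)
            - (if t = l then y * r l * q k * p k else 0) := by
      intro k l
      rw [Pi.smul_apply, smul_eq_mul, kos_apply, Pi.single_apply, Pi.single_apply]
      split_ifs <;> ring
    calc (y • q) t = y * q t := rfl
      _ = ∑ k : Fin n, ∑ l : Fin n,
            ((if t = k then y * r l * q k * p l else 0)
              - (if t = l then y * r l * q k * p k else 0)) := ?_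
      _ = ∑ k : Fin n, ∑ l : Fin n, ((y * r l * q k) • kos p k l) t := by
          refine Finset.sum_congr rfl fun k _ => Finset.sum_congr rfl fun l _ => ?_
          rw [hterm]
    simp only [Finset.sum_sub_distrib]
    have e1 : ∑ k : Fin n, ∑ l : Fin n, (if t = k then y * r l * q k * p l else 0)
        = y * q t := by
      have : ∀ k : Fin n, (∑ l : Fin n, if t = k then y * r l * q k * p l else 0)
          = if t = k then ∑ l : Fin n, y * r l * q k * p l else 0 := by
        intro k; split_ifs <;> simp
      rw [Finset.sum_congr rfl fun k _ => this k, Finset.sum_ite_eq]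
      simp only [Finset.mem_univ, if_true]
      have : ∑ l : Fin n, y * r l * q t * p l = y * q t * (r ⬝ᵥ p) := by
        rw [dotProduct, Finset.mul_sum]
        exact Finset.sum_congr rfl fun l _ => by ring
      rw [this, hrp, mul_one]
    have e2 : ∑ k : Fin n, ∑ l : Fin n, (if t = l then y * r l * q k * p k else 0)
        = 0 := by
      have : ∀ k : Fin n, (∑ l : Fin n, if t = l then y * r l * q k * p k else 0)
          = y * r t * q k * p k := by
        intro k; rw [Finset.sum_ite_eq]; simp
      rw [Finset.sum_congr rfl fun k _ => this k]
      have : ∑ k : Fin n, y * r t * q k * p k = y * r t * (q ⬝ᵥ p) := by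
        rw [dotProduct, Finset.mul_sum]
        exact Finset.sum_congr rfl fun k _ => by ring
      rw [this, hqp, mul_zero]
    rw [e1, e2, sub_zero]
  have h0 : ∀ kl : Fin n × Fin n,
      ((y * r kl.2 * q kl.1) • kos p kl.1 kl.2) ⬝ᵥ (x • p) = 0 := by
    intro kl
    rw [smul_dotProduct, dotProduct_smul, kos_dot, smul_zero, smul_zero]
  rw [tv_congr rfl hq (h' := by
    exact dot_sum Finset.univ (fun kl : Fin n × Fin n =>
      (y * r kl.2 * q kl.1) • kos p kl.1 kl.2) (x • p) h0)]
  apply tv_sum_mem I Finset.univ (x • p) _ h0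
  intro kl hkl'
  by_cases hd : kl.1 = kl.2
  · have hz : (y * r kl.2 * q kl.1) • kos p kl.1 kl.2 = 0 := by
      rw [hd, kos, sub_self, smul_zero]
    rw [tv_congr rfl hz (h' := by rw [zero_dotProduct]), tv_zero]
    exact one_mem _
  · exact lemB I hn p kl.1 kl.2 hd x (y * r kl.2 * q kl.1) hx
      (Ideal.mul_mem_right _ _ (Ideal.mul_mem_right _ _ hy)) _

lemma mat_mul_vmv (A : Matrix (Fin n) (Fin n) R) (u v : Fin n → R) :
    A * vecMulVec u v = vecMulVec (A *ᵥ u) v := by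
  ext i j
  simp only [mul_apply, vecMulVec_apply, mulVec, dotProduct, Finset.sum_mul]
  exact Finset.sum_congr rfl fun k _ => by ring

lemma vmv_mul_mat (u v : Fin n → R) (B : Matrix (Fin n) (Fin n) R) :
    vecMulVec u v * B = vecMulVec u (v ᵥ* B) := by
  ext i j
  simp only [mul_apply, vecMulVec_apply, vecMul, dotProduct, Finset.mul_sum]
  exact Finset.sum_congr rfl fun k _ => by ring

lemma conj_mem (hn : 3 ≤ n) (e g : GL (Fin n) R) (i j : Fin n) (hij : i ≠ j)
    (c : R) (hc : c ∈ I ^ 2) (hg : (g : Matrix (Fin n) (Fin n) R) = elemMatrix i j c) :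
    e * g * e⁻¹ ∈ EnIdeal R n I := by
  classical
  set E : Matrix (Fin n) (Fin n) R := (e : Matrix (Fin n) (Fin n) R) with hE
  set E' : Matrix (Fin n) (Fin n) R := ((e⁻¹ : GL (Fin n) R) : Matrix (Fin n) (Fin n) R)
    with hE'
  have hEE' : E * E' = 1 := e.val_inv
  have hE'E : E' * E = 1 := e.inv_val
  set p : Fin n → R := fun s => E s i with hp
  set q : Fin n → R := fun t => E' j t with hqdef
  set r : Fin n → R := fun t => E' i t with hrdef
  have hqp : q ⬝ᵥ p = 0 := by
    have h1 : q ⬝ᵥ p = (E' * E) j i := by rw [mul_apply]; rfl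
    rw [h1, hE'E, one_apply_ne (Ne.symm hij)]
  have hrp : r ⬝ᵥ p = 1 := by
    have h1 : r ⬝ᵥ p = (E' * E) i i := by rw [mul_apply]; rfl
    rw [h1, hE'E, one_apply]
    simp
  have hdot : ∀ c : R, q ⬝ᵥ (c • p) = 0 := fun c => by
    rw [dotProduct_smul, hqp, smul_zero]
  have key : ∀ c ∈ I * I, tv (c • p) q (hdot c) ∈ EnIdeal R n I := by
    intro c hc
    refine Submodule.mul_induction_on hc ?_ ?_
    · intro x hx y hy
      have heq : tv ((x * y) • p) q (hdot _) = tv (x • p) (y • q)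
          (by rw [smul_dotProduct, dotProduct_smul, hqp, smul_zero, smul_zero]) := by
        apply Units.ext
        show (1 : Matrix (Fin n) (Fin n) R) + vecMulVec ((x * y) • p) q
          = 1 + vecMulVec (x • p) (y • q)
        rw [vmv_smul_left, vmv_smul_left, vmv_smul_right, mul_smul]
      rw [heq]
      exact lemA I hn p q r hqp hrp x y hx hy _
    · intro c1 c2 ih1 ih2
      have heq : tv ((c1 + c2) • p) q (hdot _) =
          tv (c1 • p) q (hdot c1) * tv (c2 • p) q (hdot c2) := by
        rw [tv_mul_left _ _ _ (hdot c1) (hdot c2)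
          (by rw [← add_smul]; exact hdot _)]
        exact tv_congr (add_smul c1 c2 p) rfl
      rw [heq]
      exact mul_mem ih1 ih2
  have hfinal : e * g * e⁻¹ = tv (c • p) q (hdot c) := by
    apply Units.ext
    rw [Units.val_mul, Units.val_mul]
    show E * (g : Matrix (Fin n) (Fin n) R) * E' = 1 + vecMulVec (c • p) q
    rw [hg, elemMatrix, mul_add, mul_one, add_mul, hEE']
    congr 1
    have hstd : Matrix.single i j c
        = vecMulVec (Pi.single i (1 : R)) (Pi.single j c) := by
      rw [vmv_single_single, one_mul]
    rw [hstd, mat_mul_vmv, vmv_mul_mat, mulVec_single, single_vecMul]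
    ext s t
    simp only [vecMulVec_apply, Pi.smul_apply, smul_eq_mul, hp, hqdef, op_smul_eq_mul, col_apply,
      row_apply, mul_one]
    ring
  rw [hfinal]
  exact key c (by rwa [pow_two] at hc)

end Ideal

end EnSq

/-- **Lemma.** For `n ≥ 3` and an ideal `I` of `R`, `E_n(R, I²) ⊆ E_n(I)`. -/
theorem EnRel_sq_subset_EnIdeal (R : Type) [CommRing R] (I : Ideal R) (n : ℕ) (hn : 3 ≤ n) :
    EnRel R n (I ^ 2) ≤ EnIdeal R n I := by
  unfold EnRel
  refine (Subgroup.closure_le _).mpr ?_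
  rintro x ⟨e, -, g, hg, rfl⟩
  have hsub : EnIdeal R n (I ^ 2) ≤
      Subgroup.comap (MulAut.conj e).toMonoidHom (EnIdeal R n I) := by
    rw [EnIdeal]
    refine (Subgroup.closure_le _).mpr ?_
    rintro h ⟨i, j, c, hij, hc, hval⟩
    have : (MulAut.conj e) h ∈ EnIdeal R n I := by
      rw [MulAut.conj_apply]
      exact EnSq.conj_mem I hn e h i j hij c hc hval
    exact this
  have hx := hsub hg
  rw [Subgroup.mem_comap] at hx
  simpa using hx
end

section
/- Let R be a commutative ring, I an ideal of R, and n ≥ 3. Then E_n(I) ⊆ E_n^1(R, I), and consequently E_n(R, I²) ⊆ E_n^1(R, I). -/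
namespace En1Aux
open Matrix




open Matrix

variable {R : Type} [CommRing R] {n : ℕ}

/-- `1 + v wᵀ`. -/
def Tmat (v w : Fin n → R) : Matrix (Fin n) (Fin n) R := 1 + vecMulVec v w

lemma vecMulVec_mul_vecMulVec' (a b c d : Fin n → R) :
    vecMulVec a b * vecMulVec c d = (b ⬝ᵥ c) • vecMulVec a d := by
  ext i j
  simp only [mul_apply, vecMulVec_apply, Matrix.smul_apply, dotProduct, smul_eq_mul, Finset.sum_mul]
  exact Finset.sum_congr rfl fun k _ => by ring

lemma vecMulVec_add_right (a b c : Fin n → R) :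
    vecMulVec a (b + c) = vecMulVec a b + vecMulVec a c := by
  ext i j; simp [vecMulVec_apply, mul_add]

lemma vecMulVec_add_left (a b c : Fin n → R) :
    vecMulVec (a + b) c = vecMulVec a c + vecMulVec b c := by
  ext i j; simp [vecMulVec_apply, add_mul]

lemma vecMulVec_neg_right (a b : Fin n → R) :
    vecMulVec a (-b) = -vecMulVec a b := by
  ext i j; simp [vecMulVec_apply]

lemma vecMulVec_zero_right (a : Fin n → R) : vecMulVec a (0 : Fin n → R) = 0 := by
  ext i j; simp [vecMulVec_apply]

lemma vecMulVec_smul_comm (c : R) (a b : Fin n → R) :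
    vecMulVec (c • a) b = vecMulVec a (c • b) := by
  ext i j; simp [vecMulVec_apply]; ring

lemma mul_vecMulVec (A : Matrix (Fin n) (Fin n) R) (p r : Fin n → R) :
    A * vecMulVec p r = vecMulVec (A *ᵥ p) r := by
  ext i j
  simp only [mul_apply, vecMulVec_apply, mulVec, dotProduct, Finset.sum_mul]
  exact Finset.sum_congr rfl fun k _ => by ring

lemma vecMulVec_mul (B : Matrix (Fin n) (Fin n) R) (p r : Fin n → R) :
    vecMulVec p r * B = vecMulVec p (r ᵥ* B) := by
  ext i j
  simp only [mul_apply, vecMulVec_apply, vecMul, dotProduct, Finset.mul_sum]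
  exact Finset.sum_congr rfl fun k _ => by ring

lemma Tmat_mul (v w v' w' : Fin n → R) :
    Tmat v w * Tmat v' w' =
      1 + vecMulVec v w + vecMulVec v' w' + (w ⬝ᵥ v') • vecMulVec v w' := by
  simp only [Tmat, add_mul, mul_add, one_mul, mul_one, vecMulVec_mul_vecMulVec']
  abel

lemma Tmat_zero (v : Fin n → R) : Tmat v 0 = 1 := by
  simp [Tmat, vecMulVec_zero_right]

lemma Tmat_mul_same (v w w' : Fin n → R) (h : w ⬝ᵥ v = 0) :
    Tmat v w * Tmat v w' = Tmat v (w + w') := by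
  rw [Tmat_mul, h, zero_smul, add_zero, Tmat, vecMulVec_add_right]; abel

/-- The invertible transvection-like element `1 + v wᵀ` of `GL` when `w ⬝ᵥ v = 0`. -/
def Tgl (v w : Fin n → R) (h : w ⬝ᵥ v = 0) : GL (Fin n) R where
  val := Tmat v w
  inv := Tmat v (-w)
  val_inv := by
    rw [Tmat_mul_same v w (-w) h, add_neg_cancel, Tmat_zero]
  inv_val := by
    rw [Tmat_mul_same v (-w) w (by simp [h]), neg_add_cancel, Tmat_zero]

@[simp] lemma Tgl_val (v w : Fin n → R) (h) : (Tgl v w h : Matrix (Fin n) (Fin n) R) = Tmat v w := rfl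

@[simp] lemma Tgl_inv_val (v w : Fin n → R) (h) :
    (((Tgl v w h)⁻¹ : GL (Fin n) R) : Matrix (Fin n) (Fin n) R) = Tmat v (-w) := rfl

lemma eq_Tgl {g : GL (Fin n) R} {v w : Fin n → R} {h : w ⬝ᵥ v = 0}
    (hg : (g : Matrix (Fin n) (Fin n) R) = Tmat v w) : g = Tgl v w h := Units.ext hg

lemma vecMulVec_single_single (i j : Fin n) (c d : R) :
    vecMulVec (Pi.single i c) (Pi.single j d) = Matrix.single i j (c * d) := by
  ext k l
  simp only [vecMulVec_apply, Matrix.single, of_apply, Pi.single_apply]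
  split_ifs <;> simp_all

lemma elemMatrix_eq (i j : Fin n) (a : R) :
    elemMatrix i j a = Tmat (Pi.single i 1) (Pi.single j a) := by
  rw [elemMatrix, Tmat, vecMulVec_single_single, one_mul]

lemma elemMatrix_eq' (i j : Fin n) (a : R) :
    elemMatrix i j a = Tmat (Pi.single i a) (Pi.single j 1) := by
  rw [elemMatrix, Tmat, vecMulVec_single_single, mul_one]



open Matrix

variable {R : Type} [CommRing R] {n : ℕ}

lemma pivot_identity {v w : Fin n → R} {m : Fin n} (hvm : v m = 0) (hwm : w m = 0)
    (ho : w ⬝ᵥ v = 0) :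
    Tmat v (Pi.single m 1) * Tmat (Pi.single m 1) w * Tmat v (-(Pi.single m 1)) *
      Tmat (Pi.single m 1) (-w) = Tmat v w := by
  have hsv : (Pi.single m 1 : Fin n → R) ⬝ᵥ v = 0 := by
    rw [single_dotProduct, one_mul, hvm]
  have hws : w ⬝ᵥ (Pi.single m 1 : Fin n → R) = 0 := by
    rw [dotProduct_single, mul_one, hwm]
  have hss : (Pi.single m 1 : Fin n → R) ⬝ᵥ (Pi.single m 1 : Fin n → R) = 1 := by
    rw [dotProduct_single, mul_one, Pi.single_eq_same]
  simp only [Tmat, add_mul, mul_add, one_mul, mul_one, vecMulVec_mul_vecMulVec',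
    vecMulVec_neg_right, mul_neg, neg_mul, dotProduct_neg, neg_dotProduct, smul_neg, neg_smul,
    smul_mul_assoc, mul_smul_comm, smul_smul, hsv, hws, hss, ho, zero_smul, one_smul, neg_zero,
    neg_neg, add_zero, zero_add, mul_zero, zero_mul, mul_one, one_mul]
  abel



open Matrix

variable {R : Type} [CommRing R] {n : ℕ} {I : Ideal R}

lemma gen_mem {i j : Fin n} {a : R} (hij : i ≠ j) (ha : a ∈ I) {g : GL (Fin n) R}
    (hg : (g : Matrix (Fin n) (Fin n) R) = elemMatrix i j a) : g ∈ EnIdeal R n I :=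
  Subgroup.subset_closure ⟨i, j, a, hij, ha, hg⟩

lemma one_of_val {g : GL (Fin n) R} (hg : (g : Matrix (Fin n) (Fin n) R) = 1) : g = 1 :=
  Units.ext hg

lemma zero_vecMulVec (b : Fin n → R) : vecMulVec (0 : Fin n → R) b = 0 := by
  ext i j; simp [vecMulVec_apply]

/-- Row transvections `1 + eₘ wᵀ` with `w` having entries in `I` and `w m = 0`
lie in `E_n(I)`. -/
lemma row_mem (m : Fin n) (w : Fin n → R) (hw : ∀ k, w k ∈ I) (hwm : w m = 0)
    (g : GL (Fin n) R) (hg : (g : Matrix (Fin n) (Fin n) R) = Tmat (Pi.single m 1) w) :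
    g ∈ EnIdeal R n I := by
  classical
  have key : ∀ s : Finset (Fin n), ∀ w : Fin n → R, (∀ k, w k ∈ I) → w m = 0 →
      (∀ k ∉ s, w k = 0) → ∀ g : GL (Fin n) R,
      (g : Matrix (Fin n) (Fin n) R) = Tmat (Pi.single m 1) w → g ∈ EnIdeal R n I := by
    intro s
    induction s using Finset.induction_on with
    | empty =>
      intro w hw hwm h0 g hg
      have hwz : w = 0 := funext fun k => h0 k (by simp)
      rw [hwz, Tmat_zero] at hg
      rw [one_of_val hg]; exact one_mem _
    | @insert a s ha IH =>
      intro w hw hwm h0 g hg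
      by_cases ham : a = m
      · -- then `w a = 0` and the `a`-term contributes nothing; shrink the support set
        apply IH w hw hwm ?_ g hg
        intro k hk
        by_cases hka : k = a
        · rw [hka, ham, hwm]
        · exact h0 k (by simp [hka, hk])
      · set w' : Fin n → R := Function.update w a 0 with hw'
        have hwa : Pi.single a (w a) + w' = w := by
          funext t
          by_cases h : t = a
          · subst h; simp [hw', Function.update_self, Pi.single_eq_same]
          · simp [hw', Function.update_of_ne h, Pi.single_eq_of_ne h]
        have h1 : (Pi.single a (w a) : Fin n → R) ⬝ᵥ Pi.single m 1 = 0 := by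
          rw [single_dotProduct, Pi.single_eq_of_ne ham, mul_zero]
        have h2 : w' ⬝ᵥ (Pi.single m 1 : Fin n → R) = 0 := by
          rw [dotProduct_single, mul_one, hw', Function.update_of_ne (fun h => ham h.symm), hwm]
        have hval : (g : Matrix (Fin n) (Fin n) R) =
            Tmat (Pi.single m 1) (Pi.single a (w a)) * Tmat (Pi.single m 1) w' := by
          rw [Tmat_mul_same _ _ _ h1, hwa, hg]
        have hg1 : Tgl (Pi.single m 1) (Pi.single a (w a)) h1 ∈ EnIdeal R n I :=
          gen_mem (fun h => ham h.symm) (hw a) (by rw [Tgl_val, elemMatrix_eq])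
        have hg2 : Tgl (Pi.single m 1) w' h2 ∈ EnIdeal R n I := by
          apply IH w' ?_ ?_ ?_ _ rfl
          · intro k
            by_cases h : k = a
            · subst h; rw [hw', Function.update_self]; exact I.zero_mem
            · rw [hw', Function.update_of_ne h]; exact hw k
          · rw [hw', Function.update_of_ne (fun h => ham h.symm), hwm]
          · intro k hk
            by_cases h : k = a
            · subst h; rw [hw', Function.update_self]
            · rw [hw', Function.update_of_ne h]; exact h0 k (by simp [h, hk])
        have hgm : g = Tgl _ _ h1 * Tgl _ _ h2 := Units.ext hval
        rw [hgm]; exact mul_mem hg1 hg2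
  exact key Finset.univ w hw hwm (by simp) g hg

/-- Column transvections `1 + v eₘᵀ` with `v` having entries in `I` and `v m = 0`
lie in `E_n(I)`. -/
lemma col_mem (m : Fin n) (v : Fin n → R) (hv : ∀ k, v k ∈ I) (hvm : v m = 0)
    (g : GL (Fin n) R) (hg : (g : Matrix (Fin n) (Fin n) R) = Tmat v (Pi.single m 1)) :
    g ∈ EnIdeal R n I := by
  classical
  have key : ∀ s : Finset (Fin n), ∀ v : Fin n → R, (∀ k, v k ∈ I) → v m = 0 →
      (∀ k ∉ s, v k = 0) → ∀ g : GL (Fin n) R,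
      (g : Matrix (Fin n) (Fin n) R) = Tmat v (Pi.single m 1) → g ∈ EnIdeal R n I := by
    intro s
    induction s using Finset.induction_on with
    | empty =>
      intro v hv hvm h0 g hg
      have hvz : v = 0 := funext fun k => h0 k (by simp)
      rw [hvz, Tmat, zero_vecMulVec, add_zero] at hg
      rw [one_of_val hg]; exact one_mem _
    | @insert a s ha IH =>
      intro v hv hvm h0 g hg
      by_cases ham : a = m
      · apply IH v hv hvm ?_ g hg
        intro k hk
        by_cases hka : k = a
        · rw [hka, ham, hvm]
        · exact h0 k (by simp [hka, hk])
      · set v' : Fin n → R := Function.update v a 0 with hv'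
        have hva : Pi.single a (v a) + v' = v := by
          funext t
          by_cases h : t = a
          · subst h; simp [hv', Function.update_self, Pi.single_eq_same]
          · simp [hv', Function.update_of_ne h, Pi.single_eq_of_ne h]
        have h1 : (Pi.single m 1 : Fin n → R) ⬝ᵥ Pi.single a (v a) = 0 := by
          rw [single_dotProduct, one_mul, Pi.single_eq_of_ne (Ne.symm ham)]
        have h2 : (Pi.single m 1 : Fin n → R) ⬝ᵥ v' = 0 := by
          rw [single_dotProduct, one_mul, hv',
            Function.update_of_ne (fun h => ham h.symm), hvm]
        have hval : (g : Matrix (Fin n) (Fin n) R) =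
            Tmat (Pi.single a (v a)) (Pi.single m 1) * Tmat v' (Pi.single m 1) := by
          have hsplit : vecMulVec v (Pi.single m 1) =
              vecMulVec (Pi.single a (v a)) (Pi.single m 1) +
                vecMulVec v' (Pi.single m 1) := by
            rw [← vecMulVec_add_left, hva]
          rw [Tmat_mul, h2, zero_smul, add_zero, hg, Tmat, hsplit]
          abel
        have hg1 : Tgl (Pi.single a (v a)) (Pi.single m 1) h1 ∈ EnIdeal R n I :=
          gen_mem ham (hv a) (by rw [Tgl_val, elemMatrix_eq'])
        have hg2 : Tgl v' (Pi.single m 1) h2 ∈ EnIdeal R n I := by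
          apply IH v' ?_ ?_ ?_ _ rfl
          · intro k
            by_cases h : k = a
            · subst h; rw [hv', Function.update_self]; exact I.zero_mem
            · rw [hv', Function.update_of_ne h]; exact hv k
          · rw [hv', Function.update_of_ne (fun h => ham h.symm), hvm]
          · intro k hk
            by_cases h : k = a
            · subst h; rw [hv', Function.update_self]
            · rw [hv', Function.update_of_ne h]; exact h0 k (by simp [h, hk])
        have hgm : g = Tgl _ _ h1 * Tgl _ _ h2 := Units.ext hval
        rw [hgm]; exact mul_mem hg1 hg2
  exact key Finset.univ v hv hvm (by simp) g hg



open Matrix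

variable {R : Type} [CommRing R] {n : ℕ} {I : Ideal R}

/-- If `v, w` have entries in `I`, are orthogonal, and both vanish at `m`, then
`1 + v wᵀ ∈ E_n(I)`. -/
lemma pivot_mem (m : Fin n) (v w : Fin n → R) (hv : ∀ k, v k ∈ I) (hw : ∀ k, w k ∈ I)
    (hvm : v m = 0) (hwm : w m = 0) (ho : w ⬝ᵥ v = 0)
    (g : GL (Fin n) R) (hg : (g : Matrix (Fin n) (Fin n) R) = Tmat v w) :
    g ∈ EnIdeal R n I := by
  have hsv : (Pi.single m 1 : Fin n → R) ⬝ᵥ v = 0 := by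
    rw [single_dotProduct, one_mul, hvm]
  have hws : w ⬝ᵥ (Pi.single m 1 : Fin n → R) = 0 := by
    rw [dotProduct_single, mul_one, hwm]
  set P : GL (Fin n) R := Tgl v (Pi.single m 1) hsv with hP
  set Q : GL (Fin n) R := Tgl (Pi.single m 1) w hws with hQ
  have hPmem : P ∈ EnIdeal R n I := col_mem m v hv hvm P rfl
  have hQmem : Q ∈ EnIdeal R n I := row_mem m w hw hwm Q rfl
  have hgPQ : g = P * Q * P⁻¹ * Q⁻¹ := by
    apply Units.ext
    show (g : Matrix (Fin n) (Fin n) R) = _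
    have : ((P * Q * P⁻¹ * Q⁻¹ : GL (Fin n) R) : Matrix (Fin n) (Fin n) R) =
        Tmat v (Pi.single m 1) * Tmat (Pi.single m 1) w * Tmat v (-(Pi.single m 1)) *
          Tmat (Pi.single m 1) (-w) := by
      rfl
    rw [this, pivot_identity hvm hwm ho, hg]
  rw [hgPQ]
  exact mul_mem (mul_mem (mul_mem hPmem hQmem) (inv_mem hPmem)) (inv_mem hQmem)

/-- If `v, w` have entries in `I`, are orthogonal, and `w m = 0` for some `m`, then
`1 + v wᵀ ∈ E_n(I)`. -/
lemma split_mem (m : Fin n) (v w : Fin n → R) (hv : ∀ k, v k ∈ I) (hw : ∀ k, w k ∈ I)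
    (hwm : w m = 0) (ho : w ⬝ᵥ v = 0)
    (g : GL (Fin n) R) (hg : (g : Matrix (Fin n) (Fin n) R) = Tmat v w) :
    g ∈ EnIdeal R n I := by
  set v' : Fin n → R := v - (v m • (Pi.single m 1 : Fin n → R)) with hv'
  have hv'm : v' m = 0 := by simp [hv']
  have h1 : w ⬝ᵥ v' = 0 := by
    rw [hv', dotProduct_sub, dotProduct_smul, dotProduct_single, mul_one, hwm, smul_eq_mul,
      mul_zero, sub_zero, ho]
  have h2 : w ⬝ᵥ ((v m • (Pi.single m 1 : Fin n → R)) : Fin n → R) = 0 := by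
    rw [dotProduct_smul, dotProduct_single, mul_one, hwm, smul_eq_mul, mul_zero]
  have hval : (g : Matrix (Fin n) (Fin n) R) =
      Tmat v' w * Tmat ((v m • (Pi.single m 1 : Fin n → R))) w := by
    have hsplit : vecMulVec v w = vecMulVec v' w + vecMulVec ((v m • (Pi.single m 1 : Fin n → R))) w := by
      rw [← vecMulVec_add_left, hv', sub_add_cancel]
    rw [Tmat_mul, h2, zero_smul, add_zero, hg, Tmat, hsplit]
    abel
  have hg1 : Tgl v' w h1 ∈ EnIdeal R n I := by
    apply pivot_mem m v' w ?_ hw hv'm hwm h1 _ rfl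
    intro k
    rw [hv']
    exact I.sub_mem (hv k) (by
      simp only [Pi.smul_apply, smul_eq_mul]
      exact I.mul_mem_right _ (hv m))
  have hg2 : Tgl ((v m • (Pi.single m 1 : Fin n → R))) w h2 ∈ EnIdeal R n I := by
    apply row_mem m (v m • w) (fun k => I.mul_mem_right _ (hv m))
      (by simp [hwm]) _ ?_
    rw [Tgl_val, Tmat, Tmat, vecMulVec_smul_comm]
  have hgm : g = Tgl v' w h1 * Tgl ((v m • (Pi.single m 1 : Fin n → R))) w h2 := Units.ext hval
  rw [hgm]; exact mul_mem hg1 hg2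



open Matrix

variable {R : Type} [CommRing R] {n : ℕ} {I : Ideal R}

lemma exists_third (h3 : 3 ≤ n) (a b : Fin n) : ∃ m : Fin n, m ≠ a ∧ m ≠ b := by
  by_contra h
  push_neg at h
  have hsub : (Finset.univ : Finset (Fin n)) ⊆ {a, b} := by
    intro m _
    by_cases hm : m = a
    · simp [hm]
    · simp [h m hm]
  have h1 := Finset.card_le_card hsub
  have h2 : ({a, b} : Finset (Fin n)).card ≤ 2 :=
    le_trans (Finset.card_insert_le _ _) (by simp)
  rw [Finset.card_univ, Fintype.card_fin] at h1
  omega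

/-- The main lemma: if `u` is unimodular (`ρ ⬝ᵥ u = 1`), `q ⬝ᵥ u = 0`, and `x, y ∈ I`,
then `1 + (x • u)(y • q)ᵀ ∈ E_n(I)` (for `n ≥ 3`). -/
lemma main_mem (h3 : 3 ≤ n) (x y : R) (hx : x ∈ I) (hy : y ∈ I) (u q ρ : Fin n → R)
    (hq : q ⬝ᵥ u = 0) (hρ : ρ ⬝ᵥ u = 1)
    (g : GL (Fin n) R) (hg : (g : Matrix (Fin n) (Fin n) R) = Tmat (x • u) (y • q)) :
    g ∈ EnIdeal R n I := by
  classical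
  set v : Fin n → R := x • u with hv
  set F : Fin n × Fin n → (Fin n → R) := fun p =>
    (y * ρ p.1 * q p.2 * u p.1) • (Pi.single p.2 1 : Fin n → R)
    - (y * ρ p.1 * q p.2 * u p.2) • (Pi.single p.1 1 : Fin n → R) with hF
  have horthF : ∀ p, F p ⬝ᵥ v = 0 := by
    intro p
    rw [hF]
    simp only [sub_dotProduct, smul_dotProduct, single_dotProduct, smul_eq_mul, hv,
      Pi.smul_apply, one_mul]
    ring
  have hvI : ∀ k, v k ∈ I := by
    intro k
    rw [hv]
    simpa using I.mul_mem_right (u k) hx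
  have hFI : ∀ p k, F p k ∈ I := by
    intro p k
    rw [hF]
    simp only [Pi.sub_apply, Pi.smul_apply, smul_eq_mul]
    exact I.sub_mem
      (I.mul_mem_right _ (I.mul_mem_right _ (I.mul_mem_right _ (I.mul_mem_right _ hy))))
      (I.mul_mem_right _ (I.mul_mem_right _ (I.mul_mem_right _ (I.mul_mem_right _ hy))))
  have hFmem : ∀ p, ∀ g : GL (Fin n) R,
      (g : Matrix (Fin n) (Fin n) R) = Tmat v (F p) → g ∈ EnIdeal R n I := by
    intro p g hg
    by_cases hp : p.1 = p.2
    · have hF0 : F p = 0 := by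
        rw [hF]; dsimp only; rw [hp, sub_self]
      rw [hF0, Tmat_zero] at hg
      rw [one_of_val hg]; exact one_mem _
    · obtain ⟨m, hm1, hm2⟩ := exists_third h3 p.1 p.2
      apply split_mem m v (F p) hvI (hFI p) ?_ (horthF p) g hg
      rw [hF]
      simp [Pi.single_eq_of_ne hm1, Pi.single_eq_of_ne hm2]
  have key : ∀ s : Finset (Fin n × Fin n),
      ((∑ p ∈ s, F p) ⬝ᵥ v = 0) ∧ ∀ g : GL (Fin n) R,
        (g : Matrix (Fin n) (Fin n) R) = Tmat v (∑ p ∈ s, F p) → g ∈ EnIdeal R n I := by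
    intro s
    induction s using Finset.induction_on with
    | empty =>
      constructor
      · simp
      · intro g hg
        rw [Finset.sum_empty, Tmat_zero] at hg
        rw [one_of_val hg]; exact one_mem _
    | @insert p s hp IH =>
      have hsum : ∑ r ∈ insert p s, F r = F p + ∑ r ∈ s, F r := Finset.sum_insert hp
      refine ⟨by rw [hsum, add_dotProduct, horthF, IH.1, add_zero], ?_⟩
      intro g hg
      rw [hsum] at hg
      have hval : (g : Matrix (Fin n) (Fin n) R) =
          Tmat v (F p) * Tmat v (∑ r ∈ s, F r) := by
        rw [Tmat_mul_same _ _ _ (horthF p), hg]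
      have hgm : g = Tgl v (F p) (horthF p) * Tgl v (∑ r ∈ s, F r) IH.1 := Units.ext hval
      rw [hgm]
      exact mul_mem (hFmem p _ rfl) (IH.2 _ rfl)
  have htotal : ∑ p : Fin n × Fin n, F p = y • q := by
    funext t
    rw [Finset.sum_apply]
    have hterm : ∀ p : Fin n × Fin n, F p t =
        (y * ρ p.1 * q p.2 * u p.1) * (Pi.single p.2 1 : Fin n → R) t
          - (y * ρ p.1 * q p.2 * u p.2) * (Pi.single p.1 1 : Fin n → R) t := by
      intro p; rw [hF]; simp
    rw [Finset.sum_congr rfl fun p _ => hterm p, Finset.sum_sub_distrib]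
    have collapse : ∀ (c : Fin n → R), (∑ l, c l * (Pi.single l 1 : Fin n → R) t) = c t := by
      intro c
      have h1 : ∀ l, c l * (Pi.single l 1 : Fin n → R) t = if t = l then c l else 0 := by
        intro l; rw [Pi.single_apply]; split_ifs <;> simp
      rw [Finset.sum_congr rfl fun l _ => h1 l, Finset.sum_ite_eq]
      simp
    have hS1 : (∑ p : Fin n × Fin n, (y * ρ p.1 * q p.2 * u p.1) * (Pi.single p.2 1 : Fin n → R) t)
        = y * q t * (ρ ⬝ᵥ u) := by
      rw [Fintype.sum_prod_type]
      have : ∀ k, (∑ l, (y * ρ k * q l * u k) * (Pi.single l 1 : Fin n → R) t) = y * ρ k * q t * u k :=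
        fun k => collapse (fun l => y * ρ k * q l * u k)
      rw [Finset.sum_congr rfl fun k _ => this k, dotProduct, Finset.mul_sum]
      exact Finset.sum_congr rfl fun k _ => by ring
    have hS2 : (∑ p : Fin n × Fin n, (y * ρ p.1 * q p.2 * u p.2) * (Pi.single p.1 1 : Fin n → R) t)
        = y * ρ t * (q ⬝ᵥ u) := by
      rw [Fintype.sum_prod_type, Finset.sum_comm]
      have : ∀ l, (∑ k, (y * ρ k * q l * u l) * (Pi.single k 1 : Fin n → R) t) = y * ρ t * q l * u l :=
        fun l => collapse (fun k => y * ρ k * q l * u l)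
      rw [Finset.sum_congr rfl fun l _ => this l, dotProduct, Finset.mul_sum]
      exact Finset.sum_congr rfl fun l _ => by ring
    rw [hS1, hS2, hρ, hq]
    simp
  have := (key Finset.univ).2 g (by rw [hg, htotal])
  exact this



open Matrix

variable {R : Type} [CommRing R] {n : ℕ} {I : Ideal R}

lemma elemMatrix_eq'' (i j : Fin n) (a b : R) :
    elemMatrix i j (a * b) = Tmat (Pi.single i a) (Pi.single j b) := by
  rw [elemMatrix, Tmat, vecMulVec_single_single]

/-- Part 1: `E_n(I) ≤ E_n^1(R, I)`. -/
lemma part1 (hn : 0 < n) : EnIdeal R n I ≤ En1 R n hn I := by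
  rw [EnIdeal]
  apply (Subgroup.closure_le _).2
  rintro g ⟨i, j, a, hij, ha, hg⟩
  set z : Fin n := ⟨0, hn⟩ with hz
  by_cases hjz : j = z
  · subst hjz
    exact Subgroup.subset_closure (Or.inl ⟨i, a, hij, hg⟩)
  · by_cases hiz : i = z
    · subst hiz
      exact Subgroup.subset_closure (Or.inr ⟨j, a, ha, hjz, hg⟩)
    · have h1 : (Pi.single z 1 : Fin n → R) ⬝ᵥ (Pi.single i 1 : Fin n → R) = 0 := by
        rw [single_dotProduct, one_mul, Pi.single_eq_of_ne (Ne.symm hiz)]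
      have h2 : (Pi.single j a : Fin n → R) ⬝ᵥ (Pi.single z 1 : Fin n → R) = 0 := by
        rw [single_dotProduct, Pi.single_eq_of_ne hjz, mul_zero]
      have horth : (Pi.single j a : Fin n → R) ⬝ᵥ (Pi.single i 1 : Fin n → R) = 0 := by
        rw [single_dotProduct, Pi.single_eq_of_ne (Ne.symm hij), mul_zero]
      set P : GL (Fin n) R := Tgl (Pi.single i 1) (Pi.single z 1) h1 with hPdef
      set Q : GL (Fin n) R := Tgl (Pi.single z 1) (Pi.single j a) h2 with hQdef
      have hP : P ∈ En1 R n hn I := by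
        apply Subgroup.subset_closure
        exact Or.inl ⟨i, 1, hiz, by rw [hPdef, Tgl_val, elemMatrix_eq]⟩
      have hQ : Q ∈ En1 R n hn I := by
        apply Subgroup.subset_closure
        exact Or.inr ⟨j, a, ha, hjz, by rw [hQdef, Tgl_val, elemMatrix_eq]⟩
      have hgm : g = P * Q * P⁻¹ * Q⁻¹ := by
        apply Units.ext
        have hc : ((P * Q * P⁻¹ * Q⁻¹ : GL (Fin n) R) : Matrix (Fin n) (Fin n) R) =
            Tmat (Pi.single i 1) (Pi.single z 1) * Tmat (Pi.single z 1) (Pi.single j a) *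
              Tmat (Pi.single i 1) (-(Pi.single z 1)) *
              Tmat (Pi.single z 1) (-(Pi.single j a)) := rfl
        show (g : Matrix (Fin n) (Fin n) R) = _
        rw [hc, pivot_identity
          (show (Pi.single i 1 : Fin n → R) z = 0 from Pi.single_eq_of_ne (M := fun _ => R) (Ne.symm hiz) 1)
          (show (Pi.single j a : Fin n → R) z = 0 from Pi.single_eq_of_ne (M := fun _ => R) (Ne.symm hjz) a)
          horth, hg, elemMatrix_eq]
      rw [hgm]
      exact mul_mem (mul_mem (mul_mem hP hQ) (inv_mem hP)) (inv_mem hQ)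

/-- Part 2 (strong form): `E_n(R, I²) ≤ E_n(I)`. -/
lemma part2 (h3 : 3 ≤ n) : EnRel R n (I ^ 2) ≤ EnIdeal R n I := by
  rw [EnRel]
  apply (Subgroup.closure_le _).2
  rintro x ⟨e, _, g, hgmem, rfl⟩
  rw [EnIdeal] at hgmem
  induction hgmem using Subgroup.closure_induction with
  | one => simpa using one_mem (EnIdeal R n I)
  | mul g h _ _ pg ph =>
    have : e * (g * h) * e⁻¹ = (e * g * e⁻¹) * (e * h * e⁻¹) := by group
    rw [this]; exact mul_mem pg ph
  | inv g _ pg =>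
    have : e * g⁻¹ * e⁻¹ = (e * g * e⁻¹)⁻¹ := by group
    rw [this]; exact inv_mem pg
  | mem s hs =>
    obtain ⟨i, j, a, hij, ha, hs⟩ := hs
    have ha' : a ∈ I * I := by rwa [pow_two] at ha
    have main : ∀ a, a ∈ I * I → ∀ s : GL (Fin n) R,
        (s : Matrix (Fin n) (Fin n) R) = elemMatrix i j a →
        e * s * e⁻¹ ∈ EnIdeal R n I := by
      intro a ha
      refine Submodule.mul_induction_on ha ?_ ?_
      · intro xx hxx yy hyy s hs
        set A : Matrix (Fin n) (Fin n) R := (e : Matrix (Fin n) (Fin n) R) with hA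
        set B : Matrix (Fin n) (Fin n) R := ((e⁻¹ : GL (Fin n) R) : Matrix (Fin n) (Fin n) R)
          with hB
        have hBA : B * A = 1 := by
          rw [hA, hB, ← Units.val_mul, inv_mul_cancel, Units.val_one]
        have hAB : A * B = 1 := by
          rw [hA, hB, ← Units.val_mul, mul_inv_cancel, Units.val_one]
        set u : Fin n → R := fun k => A k i with hu
        set q : Fin n → R := fun k => B j k with hq'
        set ρ : Fin n → R := fun k => B i k with hρ'
        have hq : q ⬝ᵥ u = 0 := by
          have h1 : q ⬝ᵥ u = (B * A) j i := by rw [mul_apply]; rfl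
          rw [h1, hBA, one_apply_ne (Ne.symm hij)]
        have hρ : ρ ⬝ᵥ u = 1 := by
          have h1 : ρ ⬝ᵥ u = (B * A) i i := by rw [mul_apply]; rfl
          rw [h1, hBA, one_apply_eq]
        have hval : ((e * s * e⁻¹ : GL (Fin n) R) : Matrix (Fin n) (Fin n) R) =
            Tmat (xx • u) (yy • q) := by
          rw [Units.val_mul, Units.val_mul, hs, elemMatrix_eq'' i j xx yy, ← hA, ← hB]
          have conj : A * Tmat (Pi.single i xx) (Pi.single j yy) * B =
              Tmat (A *ᵥ Pi.single i xx) ((Pi.single j yy : Fin n → R) ᵥ* B) := by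
            simp only [Tmat]
            rw [mul_add, mul_one, add_mul, hAB, mul_vecMulVec, vecMulVec_mul]
          rw [conj]
          have e1 : A *ᵥ Pi.single i xx = xx • u := by
            funext k
            rw [mulVec_single]
            simp [hu, mul_comm]
          have e2 : (Pi.single j yy : Fin n → R) ᵥ* B = yy • q := by
            funext k
            rw [single_vecMul]
            simp [hq']
          rw [e1, e2]
        exact main_mem h3 xx yy hxx hyy u q ρ hq hρ _ hval
      · intro a b Pa Pb s hs
        have h0a : (Pi.single j a : Fin n → R) ⬝ᵥ (Pi.single i 1 : Fin n → R) = 0 := by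
          rw [single_dotProduct, Pi.single_eq_of_ne (Ne.symm hij), mul_zero]
        have h0b : (Pi.single j b : Fin n → R) ⬝ᵥ (Pi.single i 1 : Fin n → R) = 0 := by
          rw [single_dotProduct, Pi.single_eq_of_ne (Ne.symm hij), mul_zero]
        have hval : (s : Matrix (Fin n) (Fin n) R) =
            Tmat (Pi.single i 1) (Pi.single j a) * Tmat (Pi.single i 1) (Pi.single j b) := by
          rw [Tmat_mul_same _ _ _ h0a, ← Pi.single_add, hs, elemMatrix_eq]
        have hsm : s = Tgl (Pi.single i 1) (Pi.single j a) h0a *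
            Tgl (Pi.single i 1) (Pi.single j b) h0b := Units.ext hval
        have hsplit : e * s * e⁻¹ =
            (e * Tgl (Pi.single i 1) (Pi.single j a) h0a * e⁻¹) *
            (e * Tgl (Pi.single i 1) (Pi.single j b) h0b * e⁻¹) := by
          rw [hsm]; group
        rw [hsplit]
        exact mul_mem (Pa _ (by rw [Tgl_val, elemMatrix_eq])) (Pb _ (by rw [Tgl_val, elemMatrix_eq]))
    exact main a ha' s hs



end En1Aux

/-- **Lemma.** For `n ≥ 3` and an ideal `I` of `R`, `E_n(I) ⊆ E_n^1(R, I)`, and consequently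
`E_n(R, I²) ⊆ E_n^1(R, I)`. -/
theorem EnIdeal_subset_En1 (R : Type) [CommRing R] (I : Ideal R) (n : ℕ) (hn : 3 ≤ n) :
    EnIdeal R n I ≤ En1 R n (by omega) I ∧ EnRel R n (I ^ 2) ≤ En1 R n (by omega) I :=
  ⟨En1Aux.part1 (by omega), le_trans (En1Aux.part2 hn) (En1Aux.part1 (by omega))⟩
end
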